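/- arXiv:1311.5483 — 4 statements merged into one kernel-verified Lean document; each statement's English description precedes it below -/
import Mathlib

section
/- For all n ≥ 0 we have B̄_{d,r}(n) = Ē_{d,r}(n), where Ē_{d,r}(n) denotes the number of partitions of n into distinct parts congruent to ±r modulo d together with unrestricted parts divisible by 2d (equivalently, pairs (μ, ν) with |μ| + |ν| = n, μ a partition into distinct parts ≡ ±r (mod d), and ν a partition into parts divisible by 2d). -/
open scoped BigOperators


open scoped BigOperators

/-- Gap matrix `Ā_{d,r}`; symbol indices: `0 = r̄`, `1 = (d−r)‾`, `2 = d̄`, `3 = d` (non-overlined). -/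
def Abar (d r : ℕ) : Fin 4 → Fin 4 → ℕ :=
  ![![d, 2 * r, d + r, r],
    ![2 * d - 2 * r, d, 2 * d - r, d - r],
    ![2 * d - r, d + r, 2 * d, d],
    ![d - r, r, d, 0]]

/-- The symbol attached to a part `(value, overlined)`. -/
def symb (d r : ℕ) (p : ℕ × Bool) : Fin 4 :=
  if p.2 then (if p.1 % d = r then 0 else if p.1 % d = d - r then 1 else 2) else 3

/-- Parts are positive, congruent to `r`, `d−r`, or `0` mod `d`;
only multiples of `d` may be non-overlined. -/
def PartOK (d r : ℕ) (p : ℕ × Bool) : Prop :=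
  0 < p.1 ∧ (p.1 % d = r ∨ p.1 % d = d - r ∨ p.1 % d = 0) ∧ (p.2 = false → p.1 % d = 0)

/-- Relation between consecutive parts: non-decreasing, only the final occurrence of an
integer may be overlined, and conditions (ii), (iii): the difference is at least the matrix
entry and congruent to it modulo `2d`. -/
def GapRel (d r : ℕ) (a b : ℕ × Bool) : Prop :=
  a.1 ≤ b.1 ∧ (a.1 = b.1 → a.2 = false) ∧
  Abar d r (symb d r b) (symb d r a) ≤ b.1 - a.1 ∧
  (b.1 - a.1) % (2 * d) = Abar d r (symb d r b) (symb d r a) % (2 * d)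

/-- Overpartitions counted by `B̄_{d,r}`. -/
def IsBbar (d r : ℕ) (l : List (ℕ × Bool)) : Prop :=
  (∀ p ∈ l, PartOK d r p) ∧ List.Chain' (GapRel d r) l ∧
  ∀ p ∈ l.head?,
    (p.2 = true ∧ (p.1 % (2 * d) = r ∨ p.1 % (2 * d) = d - r ∨ p.1 % (2 * d) = d)) ∨
    (p.2 = false ∧ p.1 % (2 * d) = 0)

/-- Overpartitions counted by `C̄_{d,r}`: all parts `> d`, smallest part overlined and
`≡ d+r, 2d−r, 0 (mod 2d)` or non-overlined and `≡ d (mod 2d)`. -/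
def IsCbar (d r : ℕ) (l : List (ℕ × Bool)) : Prop :=
  (∀ p ∈ l, PartOK d r p ∧ d < p.1) ∧ List.Chain' (GapRel d r) l ∧
  ∀ p ∈ l.head?,
    (p.2 = true ∧ (p.1 % (2 * d) = d + r ∨ p.1 % (2 * d) = 2 * d - r ∨ p.1 % (2 * d) = 0)) ∨
    (p.2 = false ∧ p.1 % (2 * d) = d)

noncomputable def Bbar (d r n : ℕ) : ℕ :=
  Nat.card {l : List (ℕ × Bool) // IsBbar d r l ∧ (l.map Prod.fst).sum = n}

noncomputable def Cbar (d r n : ℕ) : ℕ :=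
  Nat.card {l : List (ℕ × Bool) // IsCbar d r l ∧ (l.map Prod.fst).sum = n}

/-- `B̄_{d,r}(m,n)`: those counted by `B̄_{d,r}(n)` having `m` parts. -/
noncomputable def BbarMN (d r m n : ℕ) : ℕ :=
  Nat.card {l : List (ℕ × Bool) // IsBbar d r l ∧ l.length = m ∧ (l.map Prod.fst).sum = n}

/-- `C̄_{d,r}(m,n)`: those counted by `C̄_{d,r}(n)` having `m` parts. -/
noncomputable def CbarMN (d r m n : ℕ) : ℕ :=
  Nat.card {l : List (ℕ × Bool) // IsCbar d r l ∧ l.length = m ∧ (l.map Prod.fst).sum = n}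

/-- `Ē_{d,r}(n)`: pairs `(μ, ν)` with `|μ| + |ν| = n`, where `μ` is a partition into
distinct parts `≡ ±r (mod d)` and `ν` is a partition into parts divisible by `2d`. -/
noncomputable def Ebar (d r n : ℕ) : ℕ :=
  Nat.card {p : List ℕ × List ℕ //
    p.1.Pairwise (· < ·) ∧ (∀ a ∈ p.1, a % d = r ∨ a % d = d - r) ∧
    p.2.Pairwise (· ≤ ·) ∧ (∀ a ∈ p.2, 0 < a ∧ 2 * d ∣ a) ∧
    p.1.sum + p.2.sum = n}


namespace Ovp


/-- lower contribution of a symbol -/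
def fs (d r : ℕ) (u : Fin 4) : ℕ :=
  if u = 0 then r else if u = 1 then d - r else if u = 2 then d else 0

/-- upper contribution of a symbol -/
def gs (d r : ℕ) (u : Fin 4) : ℕ :=
  if u = 0 then d - r else if u = 1 then r else if u = 2 then d else 0

variable {d r : ℕ}

lemma Abar_eq (hrd : 2 * r < d) (u v : Fin 4) :
    Abar d r u v = fs d r u + gs d r v := by
  fin_cases u <;> fin_cases v <;> simp [Abar, fs, gs] <;> omega

lemma fs_le (hrd : 2 * r < d) (u : Fin 4) : fs d r u ≤ d := by
  fin_cases u <;> simp [fs] <;> omega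

lemma gs_le (hrd : 2 * r < d) (u : Fin 4) : gs d r u ≤ d := by
  fin_cases u <;> simp [gs] <;> omega


/-- mod-d helper -/
lemma mod_lin (d a t : ℕ) (h : a < d) : (a + d * t) % d = a := by
  rw [Nat.add_mul_mod_self_left, Nat.mod_eq_of_lt h]

lemma symb_build_part (hr : 1 ≤ r) (hrd : 2 * r < d) (hb : d ∣ b) (u : Fin 4) (c : ℕ) :
    symb d r (b + fs d r u + 2 * d * c, decide (u ≠ 3)) = u := by
  obtain ⟨t, rfl⟩ := hb
  fin_cases u <;> simp only [symb, fs, decide_not] <;> simp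
  · have h1 : d * t + r + 2 * d * c = r + d * (t + 2 * c) := by ring
    rw [h1, mod_lin d r _ (by omega)]
    simp
  · have h1 : d * t + (d - r) + 2 * d * c = (d - r) + d * (t + 2 * c) := by ring
    rw [h1, mod_lin d (d - r) _ (by omega)]
    have : ¬ (d - r = r) := by omega
    simp [this]
  · have h1 : d * t + d + 2 * d * c = 0 + d * (t + 1 + 2 * c) := by ring
    rw [h1, mod_lin d 0 _ (by omega)]
    have h2 : ¬ ((0:ℕ) = r) := by omega
    have h3 : ¬ ((0:ℕ) = d - r) := by omega
    simp [h2, h3]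


def build (d r : ℕ) : ℕ → List (Fin 4) → List ℕ → List (ℕ × Bool)
  | _, [], _ => []
  | _, _ :: _, [] => []
  | b, u :: s, cv :: c =>
      (b + fs d r u + 2 * d * cv, decide (u ≠ 3)) :: build d r (b + fs d r u + gs d r u) s c

lemma build_nil_right (d r : ℕ) (b : ℕ) (s : List (Fin 4)) : build d r b s [] = [] := by
  cases s <;> rfl

lemma build_eq_nil {d r b : ℕ} {s : List (Fin 4)} {c : List ℕ}
    (hlen : s.length = c.length) (h : build d r b s c = []) : s = [] ∧ c = [] := by
  cases s with
  | nil => cases c with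
    | nil => exact ⟨rfl, rfl⟩
    | cons cv c => simp at hlen
  | cons u s => cases c with
    | nil => simp at hlen
    | cons cv c => simp [build] at h

variable {d r : ℕ}

lemma fsgs_dvd (hrd : 2 * r < d) (u : Fin 4) : d ∣ (fs d r u + gs d r u) := by
  fin_cases u <;> simp [fs, gs] <;>
    first
      | exact ⟨1, by omega⟩
      | exact ⟨2, by omega⟩

lemma gs_pos (hr : 1 ≤ r) (hrd : 2 * r < d) {u : Fin 4} (hu : u ≠ 3) : 0 < gs d r u := by
  fin_cases u <;> simp_all [gs] <;> omega

lemma fs_pos (hr : 1 ≤ r) (hrd : 2 * r < d) {u : Fin 4} (hu : u ≠ 3) : 0 < fs d r u := by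
  fin_cases u <;> simp_all [fs] <;> omega

lemma gs_eq_zero (hr : 1 ≤ r) (hrd : 2 * r < d) {u : Fin 4} (hu : gs d r u = 0) : u = 3 := by
  fin_cases u <;> simp_all [gs] <;> omega

/-- GapRel holds between two consecutive built parts. -/
lemma gap_build (hr : 1 ≤ r) (hrd : 2 * r < d) (hb : d ∣ b) {u v : Fin 4} {cu cv : ℕ}
    (hc : cu ≤ cv) :
    GapRel d r (b + fs d r u + 2 * d * cu, decide (u ≠ 3))
      ((b + fs d r u + gs d r u) + fs d r v + 2 * d * cv, decide (v ≠ 3)) := by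
  have hb' : d ∣ (b + fs d r u + gs d r u) := by
    obtain ⟨t, rfl⟩ := hb
    obtain ⟨t2, h2⟩ := fsgs_dvd hrd u
    exact ⟨t + t2, by rw [Nat.mul_add]; omega⟩
  have hsu := symb_build_part hr hrd hb u cu
  have hsv := symb_build_part hr hrd hb' v cv
  have hcv : 2 * d * cu ≤ 2 * d * cv := Nat.mul_le_mul_left _ hc
  have hdiff : ((b + fs d r u + gs d r u) + fs d r v + 2 * d * cv)
      - (b + fs d r u + 2 * d * cu)
      = (fs d r v + gs d r u) + 2 * d * (cv - cu) := by
    have : 2 * d * cv = 2 * d * cu + 2 * d * (cv - cu) := by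
      rw [← Nat.mul_add]; congr 1; omega
    omega
  refine ⟨by omega, ?_, ?_, ?_⟩
  · intro h
    have h0 : gs d r u = 0 := by omega
    have := gs_eq_zero hr hrd h0
    subst this
    simp
  · rw [hsu, hsv, Abar_eq hrd, hdiff]
    omega
  · rw [hsu, hsv, Abar_eq hrd, hdiff]
    have : fs d r v + gs d r u + 2 * d * (cv - cu)
        = (fs d r v + gs d r u) + (2 * d) * (cv - cu) := by ring
    rw [this, Nat.add_mul_mod_self_left]

/-- The built list is a GapRel chain. -/
lemma build_chain (hr : 1 ≤ r) (hrd : 2 * r < d) :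
    ∀ (s : List (Fin 4)) (c : List ℕ) (b : ℕ), d ∣ b → List.Chain' (· ≤ ·) c →
      List.Chain' (GapRel d r) (build d r b s c)
  | [], c, b, _, _ => by simp [build]; exact List.isChain_nil
  | u :: s, [], b, _, _ => by simp [build]; exact List.isChain_nil
  | [u], cv :: c, b, hb, hc => by simp [build]; exact List.isChain_singleton _
  | u :: v :: s, [cv], b, hb, hc => by simp [build, build_nil_right]; exact List.isChain_singleton _
  | u :: v :: s, cv :: cw :: c, b, hb, hc => by
    rw [build, build]
    have hb' : d ∣ (b + fs d r u + gs d r u) := by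
      obtain ⟨t, rfl⟩ := hb
      obtain ⟨t2, h2⟩ := fsgs_dvd hrd u
      exact ⟨t + t2, by rw [Nat.mul_add]; omega⟩
    have tail := build_chain hr hrd (v :: s) (cw :: c) _ hb' (List.IsChain.tail hc)
    rw [build] at tail
    refine List.IsChain.cons_cons ?_ tail
    exact gap_build hr hrd hb (List.isChain_cons_cons.1 hc).1

/-- value of every built part is at least the first built value, roughly; we prove
positivity directly. -/
lemma build_pos (hr : 1 ≤ r) (hrd : 2 * r < d) :
    ∀ (s : List (Fin 4)) (c : List ℕ) (b : ℕ), List.Chain' (· ≤ ·) c →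
      (0 < b ∨ ∀ u ∈ s.head?, ∀ cv ∈ c.head?, u = 3 → 1 ≤ cv) →
      ∀ p ∈ build d r b s c, 0 < p.1
  | [], c, b, _, _ => by simp [build]
  | u :: s, [], b, _, _ => by simp [build]
  | u :: s, cv :: c, b, hc, hh => by
    rw [build]
    intro p hp
    rcases List.mem_cons.1 hp with h | h
    · subst h
      simp only
      rcases hh with hb | hh
      · omega
      · by_cases hu : u = 3
        · have := hh u (by simp) cv (by simp) hu
          have hd : 0 < d := by omega
          nlinarith
        · have := fs_pos hr hrd hu
          omega
    · refine build_pos hr hrd s c _ (List.IsChain.tail hc) ?_ p h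
      by_cases hu : u = 3
      · subst hu
        rcases hh with hb | hh
        · left; simpa [fs, gs] using hb
        · have hcv := hh 3 (by simp) cv (by simp) rfl
          right
          intro u' hu' cw hcw _
          cases s with
          | nil => simp at hu'
          | cons a s => cases c with
            | nil => simp at hcw
            | cons c0 c =>
              simp at hcw
              subst hcw
              have := (List.isChain_cons_cons.1 hc).1
              omega
      · left
        have := fs_pos hr hrd hu
        omega

lemma build_partOK (hr : 1 ≤ r) (hrd : 2 * r < d) :
    ∀ (s : List (Fin 4)) (c : List ℕ) (b : ℕ), d ∣ b → List.Chain' (· ≤ ·) c →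
      (0 < b ∨ ∀ u ∈ s.head?, ∀ cv ∈ c.head?, u = 3 → 1 ≤ cv) →
      ∀ p ∈ build d r b s c, PartOK d r p
  | [], c, b, _, _, _ => by simp [build]
  | u :: s, [], b, _, _, _ => by simp [build]
  | u :: s, cv :: c, b, hb, hc, hh => by
    rw [build]
    intro p hp
    have hpos : 0 < p.1 := by
      refine build_pos hr hrd (u :: s) (cv :: c) b hc hh p ?_
      rw [build]; exact hp
    rcases List.mem_cons.1 hp with h | h
    · subst h
      refine ⟨hpos, ?_, ?_⟩
      · obtain ⟨t, ht⟩ := hb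
        subst ht
        fin_cases u <;> simp only [fs]<;> simp
        · left
          have h1 : d * t + r + 2 * d * cv = r + d * (t + 2 * cv) := by ring
          rw [h1, mod_lin d r _ (by omega)]
        · right; left
          have h1 : d * t + (d - r) + 2 * d * cv = (d - r) + d * (t + 2 * cv) := by ring
          rw [h1, mod_lin d (d - r) _ (by omega)]
        · right; right
          have h1 : d * t + d + 2 * d * cv = 0 + d * (t + 1 + 2 * cv) := by ring
          rw [h1, mod_lin d 0 _ (by omega)]
        · right; right
          have h1 : d * t + 2 * d * cv = 0 + d * (t + 2 * cv) := by ring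
          exact Nat.mod_eq_zero_of_dvd ⟨2 * cv, by ring⟩
      · intro h2
        have hu : u = 3 := by
          by_contra hu
          simp [hu] at h2
        subst hu
        obtain ⟨t, ht⟩ := hb
        subst ht
        simp only [fs]
        simp
        have h1 : d * t + 2 * d * cv = 0 + d * (t + 2 * cv) := by ring
        exact Nat.mod_eq_zero_of_dvd ⟨2 * cv, by ring⟩
    · have hb' : d ∣ (b + fs d r u + gs d r u) := by
        obtain ⟨t, ht⟩ := hb
        obtain ⟨t2, h2⟩ := fsgs_dvd hrd u
        exact ⟨t + t2, by rw [Nat.mul_add]; omega⟩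
      refine build_partOK hr hrd s c _ hb' (List.IsChain.tail hc) ?_ p h
      by_cases hu : u = 3
      · subst hu
        rcases hh with hb0 | hh
        · left; simp only [fs, gs]; simp; omega
        · have hcv := hh 3 (by simp) cv (by simp) rfl
          right
          intro u' hu' cw hcw _
          cases s with
          | nil => simp at hu'
          | cons a s => cases c with
            | nil => simp at hcw
            | cons c0 c =>
              simp at hcw
              subst hcw
              have := (List.isChain_cons_cons.1 hc).1
              omega
      · left
        have := fs_pos hr hrd hu
        omega

lemma build_isBbar (hr : 1 ≤ r) (hrd : 2 * r < d)
    (s : List (Fin 4)) (c : List ℕ) (hc : List.Chain' (· ≤ ·) c)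
    (hh : ∀ u ∈ s.head?, ∀ cv ∈ c.head?, u = 3 → 1 ≤ cv) :
    IsBbar d r (build d r 0 s c) := by
  refine ⟨build_partOK hr hrd s c 0 ⟨0, by ring⟩ hc (Or.inr hh) ,
    build_chain hr hrd s c 0 ⟨0, by ring⟩ hc, ?_⟩
  intro p hp
  cases s with
  | nil => simp [build] at hp
  | cons u s =>
    cases c with
    | nil => simp [build_nil_right] at hp
    | cons cv c =>
      rw [build] at hp
      simp at hp
      subst hp
      by_cases hu : u = 3
      · subst hu
        right
        simp [fs, Nat.mul_mod_right]
      · left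
        refine ⟨by simp [hu], ?_⟩
        have hlt : fs d r u < 2 * d := by
          have := fs_le hrd u
          omega
        have h2 : (fs d r u + 2 * d * cv) % (2 * d) = fs d r u := by
          rw [Nat.add_mul_mod_self_left, Nat.mod_eq_of_lt hlt]
        show (fs d r u + 2 * d * cv) % (2 * d) = r ∨
          (fs d r u + 2 * d * cv) % (2 * d) = d - r ∨
          (fs d r u + 2 * d * cv) % (2 * d) = d
        rw [h2]
        fin_cases u <;> simp_all [fs]

/-- contribution of a symbol at level m to μ -/
def contrib (d r : ℕ) (u : Fin 4) (m : ℕ) : List ℕ :=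
  if u = 0 then [r + d * m] else if u = 1 then [d - r + d * m]
  else if u = 2 then [r + d * m, d - r + d * m] else []

def mus (d r : ℕ) : List (Fin 4) → List ℕ
  | [] => []
  | u :: s => mus d r s ++ contrib d r u s.length

lemma contrib_sum (hrd : 2 * r < d) (u : Fin 4) (m : ℕ) :
    (contrib d r u m).sum = fs d r u + m * (fs d r u + gs d r u) := by
  have hsum : r + (d - r) = d := by omega
  fin_cases u <;> simp [contrib, fs, gs]
  · rw [hsum]; ring
  · rw [Nat.add_comm (d - r) r, hsum]; ring
  · have h2 : m * (d + d) = d * m + d * m := by ring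
    omega

lemma build_sum (hrd : 2 * r < d) :
    ∀ (s : List (Fin 4)) (c : List ℕ) (b : ℕ), s.length = c.length →
      ((build d r b s c).map Prod.fst).sum = b * s.length + (mus d r s).sum + 2 * d * c.sum
  | [], c, b, hlen => by
    cases c with
    | nil => simp [build, mus]
    | cons cv c => simp at hlen
  | u :: s, [], b, hlen => by simp at hlen
  | u :: s, cv :: c, b, hlen => by
    rw [build]
    simp only [List.map_cons, List.sum_cons, List.length_cons]
    rw [build_sum hrd s c _ (by simpa using hlen)]
    simp only [mus, List.sum_append, contrib_sum hrd]
    ring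

lemma exists_step {D A x : ℕ} (h1 : A ≤ x) (h2 : x % D = A % D) :
    ∃ e, x = A + D * e := by
  have hdvd : D ∣ x - A := (Nat.modEq_iff_dvd' h1).1 (Nat.ModEq.symm h2)
  obtain ⟨e, he⟩ := hdvd
  exact ⟨e, by omega⟩

lemma symb_snd (p : ℕ × Bool) : p.2 = decide (symb d r p ≠ 3) := by
  rcases p with ⟨v, b⟩
  cases b
  · simp [symb]
  · simp only [symb]
    split_ifs <;> simp

lemma symb_ne_three {p : ℕ × Bool} (h : symb d r p = 3) : p.2 = false := by
  rw [symb_snd (d := d) (r := r) p, h]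
  simp

lemma decode_aux (hr : 1 ≤ r) (hrd : 2 * r < d) :
    ∀ (l : List (ℕ × Bool)) (b : ℕ), d ∣ b →
      (∀ q ∈ l, PartOK d r q) → List.Chain' (GapRel d r) l →
      (∀ p ∈ l.head?, b + fs d r (symb d r p) ≤ p.1 ∧
        (p.1 - b) % (2 * d) = fs d r (symb d r p) % (2 * d)) →
      ∃ s c, s.length = c.length ∧ List.Chain' (· ≤ ·) c ∧ l = build d r b s c ∧
        ∀ p ∈ l.head?, ∀ cv ∈ c.head?, p.1 = b + fs d r (symb d r p) + 2 * d * cv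
  | [], b, _, _, _, _ => ⟨[], [], rfl, List.isChain_nil, by simp [build], by simp⟩
  | p :: t, b, hb, hok, hch, hhd => by
    have hd0 : 0 < d := by omega
    obtain ⟨hle, hmod⟩ := hhd p (by simp)
    have hfs : fs d r (symb d r p) < 2 * d := lt_of_le_of_lt (fs_le hrd _) (by omega)
    obtain ⟨cp, hcp⟩ := exists_step (D := 2 * d) (A := fs d r (symb d r p)) (x := p.1 - b)
      (by omega) hmod
    have hp1 : p.1 = b + fs d r (symb d r p) + 2 * d * cp := by omega
    have hpeq : p = (b + fs d r (symb d r p) + 2 * d * cp, decide (symb d r p ≠ 3)) := by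
      refine Prod.ext ?_ ?_
      · exact hp1
      · exact symb_snd p
    have hb' : d ∣ (b + fs d r (symb d r p) + gs d r (symb d r p)) := by
      obtain ⟨t1, h1⟩ := hb
      obtain ⟨t2, h2⟩ := fsgs_dvd hrd (symb d r p)
      exact ⟨t1 + t2, by rw [Nat.mul_add]; omega⟩
    set b' := b + fs d r (symb d r p) + gs d r (symb d r p) with hb'def
    have hhd' : ∀ q ∈ t.head?, (b' + fs d r (symb d r q) ≤ q.1 ∧
        (q.1 - b') % (2 * d) = fs d r (symb d r q) % (2 * d)) ∧
        ∃ e, q.1 = b' + fs d r (symb d r q) + 2 * d * (cp + e) := by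
      cases t with
      | nil => simp
      | cons q t' =>
        intro q' hq'
        simp at hq'
        subst hq'
        have hgap : GapRel d r p q := (List.isChain_cons_cons.1 hch).1
        obtain ⟨hpq, _, hA, hAmod⟩ := hgap
        rw [Abar_eq hrd] at hA hAmod
        obtain ⟨e, he⟩ := exists_step (D := 2 * d)
          (A := fs d r (symb d r q) + gs d r (symb d r p)) (x := q.1 - p.1) hA hAmod
        have hexp : 2 * d * (cp + e) = 2 * d * cp + 2 * d * e := by ring
        have hq1 : q.1 = b' + fs d r (symb d r q) + 2 * d * (cp + e) := by omega
        refine ⟨⟨by omega, ?_⟩, ⟨e, hq1⟩⟩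
        have hsub : q.1 - b' = fs d r (symb d r q) + 2 * d * (cp + e) := by omega
        rw [hsub, Nat.add_mul_mod_self_left]
    obtain ⟨s', c', hlen', hc', hteq, hcv'⟩ := decode_aux hr hrd t b' hb'
      (fun q hq => hok q (List.mem_cons_of_mem _ hq)) (List.IsChain.tail hch)
      (fun q hq => (hhd' q hq).1)
    refine ⟨symb d r p :: s', cp :: c', by simp [hlen'], ?_, ?_, ?_⟩
    · refine List.isChain_cons.2 ?_
      refine ⟨?_, hc'⟩
      intro cq hcq
      cases t with
      | nil =>
        obtain ⟨hs0, hc0⟩ := build_eq_nil hlen' hteq.symm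
        subst hc0
        simp at hcq
      | cons q t' =>
        cases s' with
        | nil =>
          have : c' = [] := by simpa using hlen'.symm
          subst this
          simp [build] at hteq
        | cons u2 s'' =>
          cases c' with
          | nil => simp at hlen'
          | cons c2 c'' =>
            simp at hcq
            subst hcq
            obtain ⟨e, he⟩ := (hhd' q (by simp)).2
            have hq2 := hcv' q (by simp) c2 (by simp)
            have h2d : 2 * d * (cp + e) = 2 * d * cp + 2 * d * e := by ring
            have h2e : 2 * d * c2 = 2 * d * (cp + e) := by omega
            have hcqe : c2 = cp + e := Nat.eq_of_mul_eq_mul_left (by omega) h2e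
            omega
    · rw [build, ← hteq, ← hpeq]
    · intro p' hp' cv hcv
      simp at hp' hcv
      subst hp'
      subst hcv
      exact hp1

lemma build_inj (hr : 1 ≤ r) (hrd : 2 * r < d) :
    ∀ (s s' : List (Fin 4)) (c c' : List ℕ) (b : ℕ), d ∣ b →
      s.length = c.length → s'.length = c'.length →
      build d r b s c = build d r b s' c' → s = s' ∧ c = c'
  | [], s', [], c', b, hb, hl, hl', heq => by
    have := build_eq_nil hl' (by rw [← heq]; simp [build])
    simp [this]
  | u :: s, [], cu :: c, c', b, hb, hl, hl', heq => by
    rw [build] at heq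
    simp [build] at heq
  | u :: s, u' :: s', cu :: c, [], b, hb, hl, hl', heq => by simp at hl'
  | [], s', cu :: c, c', b, hb, hl, hl', heq => by simp at hl
  | u :: s, s', [], c', b, hb, hl, hl', heq => by simp at hl
  | u :: s, u' :: s', cu :: c, cu' :: c', b, hb, hl, hl', heq => by
    rw [build, build] at heq
    simp only [List.cons.injEq] at heq
    obtain ⟨hhead, htail⟩ := heq
    have hu : u = u' := by
      have h1 := symb_build_part hr hrd hb u cu
      have h2 := symb_build_part hr hrd hb u' cu'
      rw [hhead] at h1
      rw [h1] at h2
      exact h2.symm ▸ rfl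
    subst hu
    have hcu : cu = cu' := by
      have hv : b + fs d r u + 2 * d * cu = b + fs d r u + 2 * d * cu' := by
        have := congrArg Prod.fst hhead
        simpa using this
      have : 2 * d * cu = 2 * d * cu' := by omega
      exact Nat.eq_of_mul_eq_mul_left (by omega) this
    subst hcu
    have hb2 : d ∣ (b + fs d r u + gs d r u) := by
      obtain ⟨t1, h1⟩ := hb
      obtain ⟨t2, h2⟩ := fsgs_dvd hrd u
      exact ⟨t1 + t2, by rw [Nat.mul_add]; omega⟩
    obtain ⟨hs, hc⟩ := build_inj hr hrd s s' c c' _ hb2 (by simpa using hl)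
      (by simpa using hl') htail
    simp [hs, hc]

lemma isBbar_repr (hr : 1 ≤ r) (hrd : 2 * r < d) {l : List (ℕ × Bool)}
    (h : IsBbar d r l) :
    ∃ s c, s.length = c.length ∧ List.Chain' (· ≤ ·) c ∧
      (∀ u ∈ s.head?, ∀ cv ∈ c.head?, u = 3 → 1 ≤ cv) ∧ l = build d r 0 s c := by
  obtain ⟨hok, hch, hhd⟩ := h
  have hd0 : 0 < d := by omega
  have hdvd : d ∣ 2 * d := ⟨2, by ring⟩
  have hhd2 : ∀ p ∈ l.head?, 0 + fs d r (symb d r p) ≤ p.1 ∧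
      (p.1 - 0) % (2 * d) = fs d r (symb d r p) % (2 * d) := by
    intro p hp
    have hmod2 : p.1 % d = (p.1 % (2 * d)) % d := (Nat.mod_mod_of_dvd p.1 hdvd).symm
    rcases hhd p hp with ⟨h2, hres⟩ | ⟨h2, hres⟩
    · rcases hres with hres | hres | hres
      · have hmd : p.1 % d = r := by rw [hmod2, hres, Nat.mod_eq_of_lt (by omega)]
        have hsy : symb d r p = 0 := by simp [symb, h2, hmd]
        have : fs d r (0 : Fin 4) = r := by simp [fs]
        rw [hsy, this]
        have : r ≤ p.1 := hres ▸ Nat.mod_le p.1 (2 * d)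
        refine ⟨by omega, ?_⟩
        rw [Nat.sub_zero, hres, Nat.mod_eq_of_lt (by omega)]
      · have hmd : p.1 % d = d - r := by rw [hmod2, hres, Nat.mod_eq_of_lt (by omega)]
        have hne : ¬ (p.1 % d = r) := by omega
        have hsy : symb d r p = 1 := by
          simp [symb, h2, hmd, hne]
          omega
        have : fs d r (1 : Fin 4) = d - r := by simp [fs]
        rw [hsy, this]
        have : d - r ≤ p.1 := hres ▸ Nat.mod_le p.1 (2 * d)
        refine ⟨by omega, ?_⟩
        rw [Nat.sub_zero, hres, Nat.mod_eq_of_lt (by omega)]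
      · have hmd : p.1 % d = 0 := by
          rw [hmod2, hres, Nat.mod_self]
        have hne : ¬ (p.1 % d = r) := by omega
        have hne2 : ¬ (p.1 % d = d - r) := by omega
        have hsy : symb d r p = 2 := by
          simp only [symb, h2, if_true, hmd]
          rw [if_neg (by omega), if_neg (by omega)]
        have : fs d r (2 : Fin 4) = d := by simp [fs]
        rw [hsy, this]
        have : d ≤ p.1 := hres ▸ Nat.mod_le p.1 (2 * d)
        refine ⟨by omega, ?_⟩
        rw [Nat.sub_zero, hres, Nat.mod_eq_of_lt (by omega)]
    · have hsy : symb d r p = 3 := by simp [symb, h2]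
      have : fs d r (3 : Fin 4) = 0 := by simp [fs]
      rw [hsy, this]
      refine ⟨by omega, ?_⟩
      rw [Nat.sub_zero, hres, Nat.zero_mod]
  obtain ⟨s, c, hlen, hc, hleq, hcv⟩ := decode_aux hr hrd l 0 ⟨0, by ring⟩ hok hch hhd2
  refine ⟨s, c, hlen, hc, ?_, hleq⟩
  intro u hu cv hcvmem hu3
  cases s with
  | nil => simp at hu
  | cons u0 s' =>
    cases c with
    | nil => simp at hcvmem
    | cons cv0 c' =>
      simp only [List.head?_cons, Option.mem_some_iff] at hu hcvmem
      rw [← hcvmem]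
      have hu0 : u0 = 3 := hu.trans hu3
      subst hu0
      rw [build] at hleq
      have hmem : ((0 : ℕ) + fs d r 3 + 2 * d * cv0, decide ((3 : Fin 4) ≠ 3)) ∈ l := by
        rw [hleq]; exact List.mem_cons_self
      have hpos := (hok _ hmem).1
      have hval : (0:ℕ) < 0 + fs d r 3 + 2 * d * cv0 := hpos
      have hf : fs d r (3 : Fin 4) = 0 := by simp [fs]
      rw [hf] at hval
      by_contra hcv0
      have hz : cv0 = 0 := by omega
      rw [hz] at hval
      simp at hval

/- ───────────── μ side ───────────── -/

lemma mus_bound (hr : 1 ≤ r) (hrd : 2 * r < d) :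
    ∀ s : List (Fin 4), ∀ a ∈ mus d r s, a < d * s.length
  | [] => by simp [mus]
  | u :: s => by
    intro a ha
    rw [mus] at ha
    rcases List.mem_append.1 ha with h | h
    · have := mus_bound hr hrd s a h
      have h2 : d * s.length ≤ d * (s.length + 1) := Nat.mul_le_mul_left d (by omega)
      simp only [List.length_cons]
      omega
    · simp only [List.length_cons]
      have h2 : d * (s.length + 1) = d * s.length + d := by ring
      fin_cases u <;> simp [contrib] at h <;> omega

lemma mus_mod (hr : 1 ≤ r) (hrd : 2 * r < d) :
    ∀ s : List (Fin 4), ∀ a ∈ mus d r s, a % d = r ∨ a % d = d - r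
  | [] => by simp [mus]
  | u :: s => by
    intro a ha
    rw [mus] at ha
    rcases List.mem_append.1 ha with h | h
    · exact mus_mod hr hrd s a h
    · have hmodr : (r + d * s.length) % d = r := mod_lin d r _ (by omega)
      have hmodr2 : (d - r + d * s.length) % d = d - r := mod_lin d (d - r) _ (by omega)
      fin_cases u <;> simp [contrib] at h <;>
        first
        | (rcases h with h | h <;> subst h <;> simp [hmodr, hmodr2])
        | (subst h; simp [hmodr, hmodr2])

lemma mus_sorted (hr : 1 ≤ r) (hrd : 2 * r < d) :
    ∀ s : List (Fin 4), (mus d r s).Pairwise (· < ·)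
  | [] => by simp [mus]
  | u :: s => by
    rw [mus]
    refine List.pairwise_append.2 ⟨mus_sorted hr hrd s, ?_, ?_⟩
    · fin_cases u <;> simp [contrib] <;> omega
    · intro x hx y hy
      have hxb := mus_bound hr hrd s x hx
      fin_cases u <;> simp [contrib] at hy <;> omega

def uAt (d r : ℕ) (μ : List ℕ) (m : ℕ) : Fin 4 :=
  if r + d * m ∈ μ then (if d - r + d * m ∈ μ then 2 else 0)
  else (if d - r + d * m ∈ μ then 1 else 3)

def sOf (d r : ℕ) (μ : List ℕ) : ℕ → List (Fin 4)
  | 0 => []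
  | m + 1 => uAt d r μ m :: sOf d r μ m

lemma sOf_length (μ : List ℕ) (m : ℕ) : (sOf d r μ m).length = m := by
  induction m with
  | zero => rfl
  | succ m ih => simp [sOf, ih]

lemma sOf_congr (hr : 1 ≤ r) (hrd : 2 * r < d) {μ μ' : List ℕ} :
    ∀ m : ℕ, (∀ x, x < d * m → (x ∈ μ ↔ x ∈ μ')) → sOf d r μ m = sOf d r μ' m
  | 0, _ => rfl
  | m + 1, h => by
    have hmono : d * m ≤ d * (m + 1) := Nat.mul_le_mul_left d (by omega)
    have hd1 : d * (m + 1) = d * m + d := by ring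
    rw [sOf, sOf, sOf_congr hr hrd m (fun x hx => h x (by omega))]
    congr 1
    unfold uAt
    have hmem1 := h (r + d * m) (by omega)
    have hmem2 := h (d - r + d * m) (by omega)
    rw [if_congr hmem1 rfl rfl]
    congr 1
    · rw [if_congr hmem2 rfl rfl]
    · rw [if_congr hmem2 rfl rfl]

lemma dropWhile_ge {t : ℕ} :
    ∀ l : List ℕ, l.Pairwise (· < ·) → ∀ x ∈ l.dropWhile (fun a => decide (a < t)), t ≤ x
  | [] => by simp
  | a :: l => by
    intro hs x hx
    rw [List.dropWhile_cons] at hx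
    by_cases ha : a < t
    · simp only [decide_eq_true_eq, ha, if_true] at hx
      exact dropWhile_ge l hs.of_cons x hx
    · simp only [decide_eq_true_eq, ha, if_false] at hx
      rcases List.mem_cons.1 hx with h | h
      · omega
      · have := (List.pairwise_cons.1 hs).1 x h
        omega

lemma two_elt_sorted (A B : ℕ) (hAB : A < B) :
    ∀ h : List ℕ, h.Pairwise (· < ·) → (∀ x ∈ h, x = A ∨ x = B) →
      h = [] ∨ h = [A] ∨ h = [B] ∨ h = [A, B] := by
  intro h hs hm
  match h, hs, hm with
  | [], _, _ => exact Or.inl rfl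
  | [x], _, hm => rcases hm x (by simp) with h | h <;> subst h <;> simp
  | x :: y :: h, hs, hm =>
    have hxy : x < y := (List.pairwise_cons.1 hs).1 y (by simp)
    have hx := hm x (by simp)
    have hy := hm y (by simp)
    cases h with
    | nil =>
      have hxA : x = A := by omega
      have hyB : y = B := by omega
      right; right; right
      rw [hxA, hyB]
    | cons z h =>
      exfalso
      have hz := hm z (by simp)
      have h1 : x < z := (List.pairwise_cons.1 hs).1 z (by simp)
      have h2 : y < z := (List.pairwise_cons.1 hs.of_cons).1 z (by simp)
      omega

def kOf (d : ℕ) (μ : List ℕ) : ℕ := μ.foldr (fun a k => max (a / d + 1) k) 0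

lemma kOf_ge {μ : List ℕ} : ∀ a ∈ μ, a / d + 1 ≤ kOf d μ := by
  induction μ with
  | nil => simp
  | cons b μ ih =>
    intro a ha
    rcases List.mem_cons.1 ha with h | h
    · subst h; simp [kOf]
    · have := ih a h
      simp only [kOf, List.foldr_cons]
      have : a / d + 1 ≤ μ.foldr (fun a k => max (a / d + 1) k) 0 := this
      omega

lemma kOf_le {μ : List ℕ} {K : ℕ} (h : ∀ a ∈ μ, a / d + 1 ≤ K) : kOf d μ ≤ K := by
  induction μ with
  | nil => simp [kOf]
  | cons b μ ih =>
    simp only [kOf, List.foldr_cons]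
    have h1 := h b (by simp)
    have h2 : kOf d μ ≤ K := ih (fun a ha => h a (List.mem_cons_of_mem _ ha))
    simp only [kOf] at h2
    omega

lemma kOf_mem {μ : List ℕ} {K : ℕ} (hK : 0 < K) (h : K ≤ kOf d μ) :
    ∃ a ∈ μ, K ≤ a / d + 1 := by
  by_contra hcon
  push_neg at hcon
  have := kOf_le (d := d) (μ := μ) (K := K - 1) (fun a ha => by have := hcon a ha; omega)
  omega

lemma mus_sOf (hr : 1 ≤ r) (hrd : 2 * r < d) :
    ∀ (m : ℕ) (μ : List ℕ), μ.Pairwise (· < ·) →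
      (∀ a ∈ μ, a % d = r ∨ a % d = d - r) → (∀ a ∈ μ, a < d * m) →
      mus d r (sOf d r μ m) = μ := by
  intro m
  induction m with
  | zero =>
    intro μ hs hres hb
    cases μ with
    | nil => simp [sOf, mus]
    | cons a μ => exact absurd (hb a (by simp)) (by simp)
  | succ m ih =>
    intro μ hs hres hb
    have hd0 : 0 < d := by omega
    set low := μ.takeWhile (fun a => decide (a < d * m)) with hlowdef
    set high := μ.dropWhile (fun a => decide (a < d * m)) with hhighdef
    have hsplit : low ++ high = μ := List.takeWhile_append_dropWhile
    have hlow_mem : ∀ x ∈ low, x < d * m := by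
      intro x hx
      have := List.mem_takeWhile_imp hx
      simpa using this
    have hlow_sub : ∀ x ∈ low, x ∈ μ := fun x hx => (List.takeWhile_sublist _).subset hx
    have hhigh_sub : ∀ x ∈ high, x ∈ μ := fun x hx => (List.dropWhile_sublist _).subset hx
    have hhigh_ge : ∀ x ∈ high, d * m ≤ x := dropWhile_ge μ hs
    have hmemiff : ∀ x, x < d * m → (x ∈ μ ↔ x ∈ low) := by
      intro x hx
      constructor
      · intro hxm
        rw [← hsplit] at hxm
        rcases List.mem_append.1 hxm with h | h
        · exact h
        · exact absurd (hhigh_ge x h) (by omega)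
      · exact hlow_sub x
    have hcongr : sOf d r μ m = sOf d r low m := sOf_congr hr hrd m hmemiff
    have hIH : mus d r (sOf d r low m) = low :=
      ih low (List.Pairwise.sublist (List.takeWhile_sublist _) hs)
        (fun a ha => hres a (hlow_sub a ha)) hlow_mem
    rw [sOf, mus, sOf_length, hcongr, hIH]
    suffices hch : contrib d r (uAt d r μ m) m = high by rw [hch, hsplit]
    have hhb : ∀ x ∈ high, x < d * (m + 1) := fun x hx => hb x (hhigh_sub x hx)
    have hmul : d * (m + 1) = d * m + d := by ring
    have hhtwo : ∀ x ∈ high, x = r + d * m ∨ x = (d - r) + d * m := by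
      intro x hx
      have h1 := hhigh_ge x hx
      have h2 := hhb x hx
      have h3 := hres x (hhigh_sub x hx)
      have hdiv : x / d = m := by
        have hle : m * d ≤ x := by
          have : m * d = d * m := by ring
          omega
        have hlt : x < (m + 1) * d := by
          have : (m + 1) * d = d * m + d := by ring
          omega
        exact Nat.div_eq_of_lt_le hle hlt
      have hxe : d * m + x % d = x := by
        have := Nat.div_add_mod x d
        rw [hdiv] at this
        exact this
      rcases h3 with h3 | h3 <;> omega
    have hhs : high.Pairwise (· < ·) := List.Pairwise.sublist (List.dropWhile_sublist _) hs
    have hAB : r + d * m < (d - r) + d * m := by omega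
    have hmemA : ((r + d * m ∈ μ) ↔ (r + d * m ∈ high)) := by
      constructor
      · intro hm2
        rw [← hsplit] at hm2
        rcases List.mem_append.1 hm2 with h | h
        · exact absurd (hlow_mem _ h) (by omega)
        · exact h
      · exact hhigh_sub _
    have hmemB : (((d - r) + d * m ∈ μ) ↔ ((d - r) + d * m ∈ high)) := by
      constructor
      · intro hm2
        rw [← hsplit] at hm2
        rcases List.mem_append.1 hm2 with h | h
        · exact absurd (hlow_mem _ h) (by omega)
        · exact h
      · exact hhigh_sub _
    rcases two_elt_sorted (r + d * m) ((d - r) + d * m) hAB high hhs hhtwo with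
      h | h | h | h <;> rw [h] at hmemA hmemB
    · have hA' : ¬ (r + d * m ∈ μ) := by rw [hmemA]; simp
      have hB' : ¬ ((d - r) + d * m ∈ μ) := by rw [hmemB]; simp
      have hu : uAt d r μ m = 3 := by unfold uAt; rw [if_neg hA', if_neg hB']
      rw [hu, h]
      simp [contrib]
    · have hA' : (r + d * m ∈ μ) := hmemA.2 (by simp)
      have hB' : ¬ ((d - r) + d * m ∈ μ) := by
        rw [hmemB]
        simp
        omega
      have hu : uAt d r μ m = 0 := by unfold uAt; rw [if_pos hA', if_neg hB']
      rw [hu, h]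
      simp [contrib]
    · have hA' : ¬ (r + d * m ∈ μ) := by
        rw [hmemA]
        simp
        omega
      have hB' : ((d - r) + d * m ∈ μ) := hmemB.2 (by simp)
      have hu : uAt d r μ m = 1 := by unfold uAt; rw [if_neg hA', if_pos hB']
      rw [hu, h]
      simp [contrib]
    · have hA' : (r + d * m ∈ μ) := hmemA.2 (by simp)
      have hB' : ((d - r) + d * m ∈ μ) := hmemB.2 (by simp)
      have hu : uAt d r μ m = 2 := by unfold uAt; rw [if_pos hA', if_pos hB']
      rw [hu, h]
      simp [contrib]

/- ───────────── ν side ───────────── -/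

def nuOf (d : ℕ) (c : List ℕ) : List ℕ :=
  (c.filter (fun x => decide (0 < x))).map (fun x => 2 * d * x)

def cOf (d : ℕ) (ν : List ℕ) (k : ℕ) : List ℕ :=
  List.replicate (k - ν.length) 0 ++ ν.map (fun a => a / (2 * d))

lemma nuOf_sum : ∀ c : List ℕ, (nuOf d c).sum = 2 * d * c.sum
  | [] => by simp [nuOf]
  | x :: c => by
    have hexp : (2:ℕ) * d * (x + c.sum) = 2 * d * x + 2 * d * c.sum := by ring
    have ihs := nuOf_sum c
    simp only [nuOf] at ihs ⊢
    by_cases hx : 0 < x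
    · rw [List.filter_cons, if_pos (by simpa using hx)]
      simp only [List.map_cons, List.sum_cons, List.sum_cons]
      rw [ihs]
      omega
    · have hx0 : x = 0 := by omega
      subst hx0
      rw [List.filter_cons, if_neg (by simp)]
      rw [ihs]
      simp

lemma nuOf_sorted (c : List ℕ) (hc : List.Chain' (· ≤ ·) c) :
    (nuOf d c).Pairwise (· ≤ ·) := by
  have hp : c.Pairwise (· ≤ ·) := List.isChain_iff_pairwise.1 hc
  have hf : (c.filter (fun x => decide (0 < x))).Pairwise (· ≤ ·) := hp.filter _
  exact hf.map _ (fun a b hab => Nat.mul_le_mul_left _ hab)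

lemma nuOf_pos_dvd (hd : 0 < d) (c : List ℕ) :
    ∀ a ∈ nuOf d c, 0 < a ∧ 2 * d ∣ a := by
  intro a ha
  simp only [nuOf, List.mem_map, List.mem_filter] at ha
  obtain ⟨x, ⟨hxc, hx⟩, hxa⟩ := ha
  simp at hx
  subst hxa
  exact ⟨by positivity, Dvd.intro _ rfl⟩

lemma cOf_len (ν : List ℕ) (k : ℕ) (h : ν.length ≤ k) : (cOf d ν k).length = k := by
  simp [cOf]
  omega

lemma cOf_chain (ν : List ℕ) (k : ℕ) (hν : ν.Pairwise (· ≤ ·)) :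
    List.Chain' (· ≤ ·) (cOf d ν k) := by
  apply List.isChain_iff_pairwise.2
  apply List.pairwise_append.2
  refine ⟨?_, ?_, ?_⟩
  · exact List.pairwise_replicate.2 (by simp)
  · exact hν.map _ (fun a b hab => Nat.div_le_div_right hab)
  · intro x hx y hy
    have : x = 0 := List.eq_of_mem_replicate hx
    omega

lemma nuOf_cOf (hd : 0 < d) (ν : List ℕ) (k : ℕ) (hν : ∀ a ∈ ν, 0 < a ∧ 2 * d ∣ a) :
    nuOf d (cOf d ν k) = ν := by
  unfold nuOf cOf
  rw [List.filter_append]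
  have h1 : (List.replicate (k - ν.length) 0).filter (fun x => decide (0 < x)) = [] := by
    apply List.filter_eq_nil_iff.2
    intro a ha
    have : a = 0 := List.eq_of_mem_replicate ha
    simp [this]
  rw [h1, List.nil_append]
  have h2 : (ν.map (fun a => a / (2 * d))).filter (fun x => decide (0 < x))
      = ν.map (fun a => a / (2 * d)) := by
    apply List.filter_eq_self.2
    intro a ha
    obtain ⟨x, hx, hxa⟩ := List.mem_map.1 ha
    obtain ⟨hxpos, t, ht⟩ := hν x hx
    subst hxa ht
    simp
    have htpos : 0 < t := Nat.pos_of_ne_zero (by rintro rfl; simp at hxpos)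
    exact ⟨by omega, Nat.le_mul_of_pos_right _ htpos⟩
  rw [h2, List.map_map]
  have h3 : ∀ x ∈ ν, ((fun x => 2 * d * x) ∘ fun a => a / (2 * d)) x = id x := by
    intro x hx
    obtain ⟨hxpos, hdvd⟩ := hν x hx
    simp
    exact Nat.mul_div_cancel' hdvd
  rw [List.map_congr_left h3, List.map_id]

lemma chain_pos_filter : ∀ (t : List ℕ) (x : ℕ), 0 < x → List.Chain' (· ≤ ·) (x :: t) →
    (x :: t).filter (fun y => decide (0 < y)) = x :: t
  | [], x, hx, _ => by
    rw [List.filter_cons, if_pos (by simpa using hx)]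
    simp
  | y :: t, x, hx, hch => by
    have h1 : x ≤ y := (List.isChain_cons_cons.1 hch).1
    have h2 := chain_pos_filter t y (by omega) (List.IsChain.tail hch)
    rw [List.filter_cons, if_pos (by simpa using hx), h2]

lemma cOf_nuOf : ∀ (c : List ℕ), List.Chain' (· ≤ ·) c → 0 < d →
    cOf d (nuOf d c) c.length = c
  | [], _, _ => by simp [cOf, nuOf]
  | x :: c, hch, hd => by
    by_cases hx : 0 < x
    · have hfil : (x :: c).filter (fun y => decide (0 < y)) = x :: c :=
        chain_pos_filter c x hx hch
      unfold cOf nuOf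
      rw [hfil]
      simp only [List.length_map, List.length_cons, Nat.sub_self, List.replicate_zero,
        List.nil_append, List.map_map]
      have h3 : ∀ y ∈ x :: c, ((fun a => a / (2 * d)) ∘ (fun y => 2 * d * y)) y = id y := by
        intro y hy
        simp
        exact Nat.mul_div_cancel_left y (by omega)
      rw [List.map_congr_left h3, List.map_id]
    · have hx0 : x = 0 := by omega
      subst hx0
      have ih := cOf_nuOf c (List.IsChain.tail hch) hd
      unfold cOf nuOf at ih ⊢
      rw [List.filter_cons, if_neg (by simp)]
      have hlen : ((c.filter (fun x => decide (0 < x))).map (fun x => 2 * d * x)).length ≤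
          c.length := by
        simp only [List.length_map]
        exact List.length_filter_le _ _
      rw [List.length_cons]
      rw [show c.length + 1 -
          ((c.filter (fun x => decide (0 < x))).map (fun x => 2 * d * x)).length
          = (c.length -
          ((c.filter (fun x => decide (0 < x))).map (fun x => 2 * d * x)).length) + 1
          by omega]
      rw [List.replicate_succ, List.cons_append, ih]

lemma sOf_mus (hr : 1 ≤ r) (hrd : 2 * r < d) :
    ∀ s : List (Fin 4), sOf d r (mus d r s) s.length = s
  | [] => rfl
  | u :: s => by
    have hd0 : 0 < d := by omega
    rw [List.length_cons, sOf]
    have hbound := mus_bound hr hrd s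
    have hcongr : sOf d r (mus d r (u :: s)) s.length = sOf d r (mus d r s) s.length := by
      apply sOf_congr hr hrd
      intro x hx
      rw [mus, List.mem_append]
      constructor
      · rintro (h | h)
        · exact h
        · exfalso
          fin_cases u <;> simp [contrib] at h <;> omega
      · intro h
        exact Or.inl h
    have huAt : uAt d r (mus d r (u :: s)) s.length = u := by
      have hnotA : ¬ (r + d * s.length ∈ mus d r s) := fun h => absurd (hbound _ h) (by omega)
      have hnotB : ¬ ((d - r) + d * s.length ∈ mus d r s) := fun h =>
        absurd (hbound _ h) (by omega)
      have hA_iff : (r + d * s.length ∈ mus d r (u :: s)) ↔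
          (r + d * s.length ∈ contrib d r u s.length) := by
        rw [mus, List.mem_append]
        exact or_iff_right hnotA
      have hB_iff : ((d - r) + d * s.length ∈ mus d r (u :: s)) ↔
          ((d - r) + d * s.length ∈ contrib d r u s.length) := by
        rw [mus, List.mem_append]
        exact or_iff_right hnotB
      unfold uAt
      rw [if_congr hA_iff rfl rfl, if_congr hB_iff rfl rfl, if_congr hB_iff rfl rfl]
      have hne : ¬ ((d : ℕ) - r + d * s.length = r + d * s.length) := by omega
      have hne' : ¬ ((r : ℕ) + d * s.length = d - r + d * s.length) := by omega
      fin_cases u <;> simp [contrib, hne, hne'] <;> omega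
    rw [huAt, hcongr, sOf_mus hr hrd s]

lemma nuOf_length (c : List ℕ) :
    (nuOf d c).length = (c.filter (fun x => decide (0 < x))).length := by
  simp [nuOf]

lemma nuOf_length_le (c : List ℕ) : (nuOf d c).length ≤ c.length := by
  rw [nuOf_length]
  exact List.length_filter_le _ _

lemma kOf_mus_le (hr : 1 ≤ r) (hrd : 2 * r < d) (s : List (Fin 4)) :
    kOf d (mus d r s) ≤ s.length := by
  apply kOf_le
  intro a ha
  have hb := mus_bound hr hrd s a ha
  have hd0 : 0 < d := by omega
  have : a / d < s.length := by
    rw [Nat.div_lt_iff_lt_mul hd0]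
    have : s.length * d = d * s.length := by ring
    omega
  omega

lemma T_k_eq (hr : 1 ≤ r) (hrd : 2 * r < d) (s : List (Fin 4)) (c : List ℕ)
    (hlen : s.length = c.length) (hc : List.Chain' (· ≤ ·) c)
    (hhead : ∀ u ∈ s.head?, ∀ cv ∈ c.head?, u = 3 → 1 ≤ cv) :
    max (kOf d (mus d r s)) ((nuOf d c).length) = s.length := by
  have hd0 : 0 < d := by omega
  have h1 : kOf d (mus d r s) ≤ s.length := kOf_mus_le hr hrd s
  have h2 : (nuOf d c).length ≤ s.length := by
    rw [hlen]
    exact nuOf_length_le c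
  cases s with
  | nil =>
    have : c = [] := List.length_eq_zero_iff.1 (by simp at hlen; omega)
    subst this
    simp [mus, nuOf, kOf]
  | cons u0 s' =>
    by_cases hu0 : u0 = 3
    · subst hu0
      cases c with
      | nil => simp at hlen
      | cons cv0 c' =>
        have hcv0 : 1 ≤ cv0 := hhead 3 (by simp) cv0 (by simp) rfl
        have hfil : (cv0 :: c').filter (fun y => decide (0 < y)) = cv0 :: c' :=
          chain_pos_filter c' cv0 (by omega) hc
        have : (nuOf d (cv0 :: c')).length = (cv0 :: c').length := by
          rw [nuOf_length, hfil]
        omega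
    · -- bottom symbol contributes a part at level s'.length
      have hmem : ∃ a ∈ mus d r (u0 :: s'), a / d = s'.length := by
        have hdiv1 : (r + d * s'.length) / d = s'.length := by
          rw [Nat.add_mul_div_left _ _ hd0, Nat.div_eq_of_lt (by omega)]
          omega
        have hdiv2 : ((d - r) + d * s'.length) / d = s'.length := by
          rw [Nat.add_mul_div_left _ _ hd0, Nat.div_eq_of_lt (by omega)]
          omega
        fin_cases u0
        · exact ⟨r + d * s'.length, by rw [mus]; exact List.mem_append_right _ (by simp [contrib]), hdiv1⟩
        · exact ⟨(d - r) + d * s'.length, by rw [mus]; exact List.mem_append_right _ (by simp [contrib]), hdiv2⟩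
        · exact ⟨r + d * s'.length, by rw [mus]; exact List.mem_append_right _ (by simp [contrib]), hdiv1⟩
        · exact absurd rfl hu0
      obtain ⟨a, ham, hadiv⟩ := hmem
      have := kOf_ge (d := d) a ham
      rw [hadiv] at this
      simp only [List.length_cons] at h1 h2 ⊢
      omega

/- ───────────── assembly ───────────── -/

def Tcond (d r n : ℕ) (sc : List (Fin 4) × List ℕ) : Prop :=
  sc.1.length = sc.2.length ∧ List.Chain' (· ≤ ·) sc.2 ∧
  (∀ u ∈ sc.1.head?, ∀ cv ∈ sc.2.head?, u = 3 → 1 ≤ cv) ∧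
  ((build d r 0 sc.1 sc.2).map Prod.fst).sum = n

lemma card_B_eq_T (hr : 1 ≤ r) (hrd : 2 * r < d) (n : ℕ) :
    Nat.card {sc : List (Fin 4) × List ℕ // Tcond d r n sc}
      = Nat.card {l : List (ℕ × Bool) // IsBbar d r l ∧ (l.map Prod.fst).sum = n} := by
  apply Nat.card_eq_of_bijective
    (f := fun x => ⟨build d r 0 x.1.1 x.1.2,
      build_isBbar hr hrd x.1.1 x.1.2 x.2.2.1 x.2.2.2.1, x.2.2.2.2⟩)
  constructor
  · rintro ⟨⟨s1, c1⟩, h1⟩ ⟨⟨s2, c2⟩, h2⟩ heq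
    simp only [Subtype.mk.injEq] at heq
    obtain ⟨hs, hc⟩ := build_inj hr hrd s1 s2 c1 c2 0 ⟨0, by ring⟩ h1.1 h2.1 heq
    simp [hs, hc]
  · rintro ⟨l, hB, hsum⟩
    obtain ⟨s, c, hlen, hc, hhead, hleq⟩ := isBbar_repr hr hrd hB
    refine ⟨⟨(s, c), hlen, hc, hhead, ?_⟩, ?_⟩
    · rw [← hleq]; exact hsum
    · simp only [Subtype.mk.injEq]
      exact hleq.symm

def Econd (d r n : ℕ) (p : List ℕ × List ℕ) : Prop :=
  p.1.Pairwise (· < ·) ∧ (∀ a ∈ p.1, a % d = r ∨ a % d = d - r) ∧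
  p.2.Pairwise (· ≤ ·) ∧ (∀ a ∈ p.2, 0 < a ∧ 2 * d ∣ a) ∧
  p.1.sum + p.2.sum = n

lemma card_T_eq_E (hr : 1 ≤ r) (hrd : 2 * r < d) (n : ℕ) :
    Nat.card {sc : List (Fin 4) × List ℕ // Tcond d r n sc}
      = Nat.card {p : List ℕ × List ℕ // Econd d r n p} := by
  have hd0 : 0 < d := by omega
  apply Nat.card_eq_of_bijective
    (f := fun x => ⟨(mus d r x.1.1, nuOf d x.1.2), mus_sorted hr hrd x.1.1,
      mus_mod hr hrd x.1.1, nuOf_sorted x.1.2 x.2.2.1, nuOf_pos_dvd hd0 x.1.2, by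
        have hbs := build_sum hrd x.1.1 x.1.2 0 x.2.1
        have hns := nuOf_sum (d := d) x.1.2
        have hws := x.2.2.2.2
        simp only [Nat.zero_mul, Nat.zero_add] at hbs
        show (mus d r x.1.1).sum + (nuOf d x.1.2).sum = n
        omega⟩)
  constructor
  · rintro ⟨⟨s1, c1⟩, hx⟩ ⟨⟨s2, c2⟩, hy⟩ heq
    simp only [Subtype.mk.injEq, Prod.mk.injEq, Subtype.ext_iff] at heq
    obtain ⟨hmu, hnu⟩ := heq
    have hk1 := T_k_eq hr hrd s1 c1 hx.1 hx.2.1 hx.2.2.1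
    have hk2 := T_k_eq hr hrd s2 c2 hy.1 hy.2.1 hy.2.2.1
    rw [hmu, hnu] at hk1
    have hklen : s1.length = s2.length := by rw [← hk1, ← hk2]
    have hs : s1 = s2 := by
      have e1 := sOf_mus hr hrd s1
      have e2 := sOf_mus hr hrd s2
      rw [← e1, ← e2, hmu, hklen]
    have hcc : c1 = c2 := by
      have e1 := cOf_nuOf c1 hx.2.1 hd0
      have e2 := cOf_nuOf c2 hy.2.1 hd0
      have hclen : c1.length = c2.length := by rw [← hx.1, ← hy.1, hklen]
      rw [← e1, ← e2, hnu, hclen]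
    simp [hs, hcc]
  · rintro ⟨⟨μ, ν⟩, hμs, hμr, hνs, hνpd, hsum⟩
    set k := max (kOf d μ) ν.length with hkdef
    have hνlen : ν.length ≤ k := le_max_right _ _
    have hslen : (sOf d r μ k).length = k := sOf_length μ k
    have hclen : (cOf d ν k).length = k := cOf_len ν k hνlen
    have hμb : ∀ a ∈ μ, a < d * k := by
      intro a ha
      have h1 := kOf_ge (d := d) a ha
      have h2 : kOf d μ ≤ k := le_max_left _ _
      have : a / d < k := by omega
      rw [Nat.div_lt_iff_lt_mul hd0] at this
      have hcomm : k * d = d * k := by ring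
      omega
    have hmus : mus d r (sOf d r μ k) = μ := mus_sOf hr hrd k μ hμs hμr hμb
    have hnu : nuOf d (cOf d ν k) = ν := nuOf_cOf hd0 ν k hνpd
    have hhead : ∀ u ∈ (sOf d r μ k).head?, ∀ cv ∈ (cOf d ν k).head?, u = 3 → 1 ≤ cv := by
      cases hk : k with
      | zero => simp [hk, sOf]
      | succ m =>
        intro u hu cv hcv hu3
        rw [sOf] at hu
        simp only [List.head?_cons, Option.mem_some_iff] at hu
        -- u = uAt μ m and u = 3
        have huAt3 : uAt d r μ m = 3 := hu.trans hu3
        have hnots : ¬ (r + d * m ∈ μ) ∧ ¬ ((d - r) + d * m ∈ μ) := by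
          unfold uAt at huAt3
          split at huAt3
          · split at huAt3
            · exact absurd huAt3 (by decide)
            · exact absurd huAt3 (by decide)
          · split at huAt3
            · exact absurd huAt3 (by decide)
            · exact ⟨by assumption, by assumption⟩
        obtain ⟨hAnot, hBnot⟩ := hnots
        have hkOf : kOf d μ ≤ m := by
          by_contra hcon
          push_neg at hcon
          obtain ⟨a, ha, hadiv⟩ := kOf_mem (d := d) (by omega) hcon
          have hb := hμb a ha
          rw [hk] at hb
          have hdivlt : a / d < m + 1 := by
            rw [Nat.div_lt_iff_lt_mul hd0]
            have : (m + 1) * d = d * (m + 1) := by ring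
            omega
          have hdiveq : a / d = m := by omega
          have hae : d * m + a % d = a := by
            have := Nat.div_add_mod a d
            rw [hdiveq] at this
            exact this
          rcases hμr a ha with h | h
          · exact hAnot (by rw [show r + d * m = a by omega]; exact ha)
          · exact hBnot (by rw [show (d - r) + d * m = a by omega]; exact ha)
        have hkν : k = ν.length := by omega
        -- c = ν.map (· / (2*d))
        have hrep : k - ν.length = 0 := by omega
        cases ν with
        | nil => rw [hk] at hkν; simp at hkν
        | cons v ν' =>
          unfold cOf at hcv
          have hrep' : m + 1 - (v :: ν').length = 0 := by omega
          rw [hrep'] at hcv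
          simp only [List.replicate_zero, List.nil_append, List.map_cons,
            List.head?_cons, Option.mem_some_iff] at hcv
          obtain ⟨hvpos, t, ht⟩ := hνpd v (by simp)
          rw [← hcv, ht]
          rw [Nat.mul_div_cancel_left t (by omega)]
          by_contra h0
          have ht0 : t = 0 := by omega
          subst ht0
          simp at ht
          omega
    refine ⟨⟨(sOf d r μ k, cOf d ν k), by
      constructor
      · rw [hslen, hclen]
      refine ⟨cOf_chain ν k hνs, hhead, ?_⟩
      have hbs := build_sum hrd (sOf d r μ k) (cOf d ν k) 0 (by rw [hslen, hclen])
      have hns := nuOf_sum (d := d) (cOf d ν k)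
      rw [hnu] at hns
      simp only [Nat.zero_mul, Nat.zero_add] at hbs
      rw [hbs, hmus]
      have hsum' : μ.sum + ν.sum = n := hsum
      omega⟩, ?_⟩
    simp only [Subtype.mk.injEq, Prod.mk.injEq, Subtype.ext_iff]
    exact ⟨hmus, hnu⟩

end Ovp

/-- Corollary 1.2: `B̄_{d,r}(n) = Ē_{d,r}(n)` for all `n`. -/
theorem Bbar_eq_Ebar (d r : ℕ) (hd : 3 ≤ d) (hr : 1 ≤ r) (hrd : 2 * r < d) :
    ∀ n : ℕ, Bbar d r n = Ebar d r n := by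
  intro n
  have h1 := Ovp.card_B_eq_T (d := d) (r := r) hr hrd n
  have h2 := Ovp.card_T_eq_E (d := d) (r := r) hr hrd n
  unfold Bbar Ebar
  rw [← h1, h2]
  rfl
end

section
/- Let q, y ∈ ℂ with 0 < |q| < 1 and y ≠ 0. Suppose F is analytic in x on the disk |x| < 1, satisfies F(0) = 1, and satisfies F(x) = (x y + x q/y)/(1 − x q) · F(x q) + (1 + x q)/(1 − x q²) · F(x q²) for all |x| < 1. Then for all |x| < 1, F(x) = (−x;q)_∞/(xq;q)_∞ · Σ_{n≥0} (y;q)_n (q/y;q)_n (−x)^n / (q²;q²)_n. -/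
set_option maxHeartbeats 1000000

/-- Finite q-Pochhammer symbol `(a;q)_n`. -/
noncomputable def poch (a q : ℂ) (n : ℕ) : ℂ := ∏ j ∈ Finset.range n, (1 - a * q ^ j)

/-- Infinite q-Pochhammer symbol `(a;q)_∞`. -/
noncomputable def pochInf (a q : ℂ) : ℂ := ∏' j : ℕ, (1 - a * q ^ j)

/-- The universal mock theta function `g₂(x;q)`. -/
noncomputable def g2 (x q : ℂ) : ℂ :=
  ∑' n : ℕ, poch (-q) q n * q ^ (n * (n + 1) / 2) / (poch x q (n + 1) * poch (q / x) q (n + 1))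

section Products

variable {a q : ℂ}

lemma factor_ne_zero (hq : ‖q‖ < 1) (ha : ‖a‖ < 1) (j : ℕ) : (1 : ℂ) - a * q ^ j ≠ 0 := by
  intro h
  have h1 : ‖a * q ^ j‖ < 1 := by
    rw [norm_mul, norm_pow]
    calc ‖a‖ * ‖q‖ ^ j ≤ ‖a‖ * 1 := by
          apply mul_le_mul_of_nonneg_left _ (norm_nonneg a)
          exact pow_le_one₀ (norm_nonneg q) hq.le
      _ < 1 := by simpa using ha
  have : a * q ^ j = 1 := by linear_combination -h
  rw [this] at h1
  simp at h1

lemma summable_log_factors (hq : ‖q‖ < 1) (ha : ‖a‖ < 1) :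
    Summable (fun j : ℕ => Complex.log (1 - a * q ^ j)) := by
  have hgeo : Summable (fun j : ℕ => (3/2 : ℝ) * (‖a‖ * ‖q‖ ^ j)) :=
    ((summable_geometric_of_lt_one (norm_nonneg q) hq).mul_left _).mul_left _
  apply Summable.of_norm_bounded_eventually hgeo
  rw [Nat.cofinite_eq_atTop]
  have htend : Filter.Tendsto (fun j : ℕ => ‖a‖ * ‖q‖ ^ j) Filter.atTop (nhds 0) := by
    simpa using (tendsto_pow_atTop_nhds_zero_of_lt_one (norm_nonneg q) hq).const_mul ‖a‖
  filter_upwards [htend.eventually_le_const (by norm_num : (0:ℝ) < 1/2)] with j hj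
  have h2 : ‖-(a * q ^ j)‖ ≤ 1/2 := by
    rw [norm_neg, norm_mul, norm_pow]; exact hj
  have := Complex.norm_log_one_add_half_le_self h2
  rw [show (1 : ℂ) + -(a * q ^ j) = 1 - a * q ^ j by ring] at this
  calc ‖Complex.log (1 - a * q ^ j)‖ ≤ 3/2 * ‖-(a * q ^ j)‖ := this
    _ = 3/2 * (‖a‖ * ‖q‖ ^ j) := by rw [norm_neg, norm_mul, norm_pow]

lemma hasProd_factors (hq : ‖q‖ < 1) (ha : ‖a‖ < 1) :
    HasProd (fun j : ℕ => 1 - a * q ^ j)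
      (Complex.exp (∑' j : ℕ, Complex.log (1 - a * q ^ j))) := by
  have hfun : (fun j : ℕ => 1 - a * q ^ j)
      = Complex.exp ∘ (fun j : ℕ => Complex.log (1 - a * q ^ j)) :=
    funext fun j => (Complex.exp_log (factor_ne_zero hq ha j)).symm
  rw [hfun]
  exact (summable_log_factors hq ha).hasSum.cexp

lemma pochInf_eq_exp (hq : ‖q‖ < 1) (ha : ‖a‖ < 1) :
    pochInf a q = Complex.exp (∑' j : ℕ, Complex.log (1 - a * q ^ j)) :=
  (hasProd_factors hq ha).tprod_eq

lemma pochInf_ne_zero (hq : ‖q‖ < 1) (ha : ‖a‖ < 1) : pochInf a q ≠ 0 := by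
  rw [pochInf_eq_exp hq ha]; exact Complex.exp_ne_zero _

lemma multipliable_factors (hq : ‖q‖ < 1) (ha : ‖a‖ < 1) :
    Multipliable (fun j : ℕ => 1 - a * q ^ j) :=
  ⟨_, hasProd_factors hq ha⟩

lemma norm_mul_lt_one (hq : ‖q‖ < 1) (ha : ‖a‖ < 1) : ‖a * q‖ < 1 := by
  rw [norm_mul]
  nlinarith [norm_nonneg a, norm_nonneg q]

lemma pochInf_peel (hq : ‖q‖ < 1) (ha : ‖a‖ < 1) :
    pochInf a q = (1 - a) * pochInf (a * q) q := by
  have hshift : (fun j : ℕ => 1 - a * q ^ (j + 1))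
      = fun j : ℕ => 1 - (a * q) * q ^ j := by
    funext j; rw [pow_succ]; ring
  have hm : Multipliable (fun j : ℕ => 1 - a * q ^ (j + 1)) := by
    rw [hshift]; exact multipliable_factors hq (norm_mul_lt_one hq ha)
  have h : ∏' j : ℕ, (1 - a * q ^ j)
      = (1 - a * q ^ 0) * ∏' j : ℕ, (1 - a * q ^ (j + 1)) :=
    tprod_eq_zero_mul' hm
  rw [pochInf, h, hshift]
  simp only [pow_zero, mul_one]
  rfl

lemma norm_log_factor_le (ha : ‖a‖ ≤ 1/2) (j : ℕ) (hqle : ‖q‖ ≤ 1) :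
    ‖Complex.log (1 - a * q ^ j)‖ ≤ 3/2 * (‖a‖ * ‖q‖ ^ j) := by
  have h2 : ‖-(a * q ^ j)‖ ≤ 1/2 := by
    rw [norm_neg, norm_mul, norm_pow]
    calc ‖a‖ * ‖q‖ ^ j ≤ ‖a‖ * 1 :=
          mul_le_mul_of_nonneg_left (pow_le_one₀ (norm_nonneg q) hqle) (norm_nonneg a)
      _ ≤ 1/2 := by simpa using ha
  have := Complex.norm_log_one_add_half_le_self h2
  rw [show (1 : ℂ) + -(a * q ^ j) = 1 - a * q ^ j by ring] at this
  calc ‖Complex.log (1 - a * q ^ j)‖ ≤ 3/2 * ‖-(a * q ^ j)‖ := this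
    _ = 3/2 * (‖a‖ * ‖q‖ ^ j) := by rw [norm_neg, norm_mul, norm_pow]

lemma pochInf_sub_one_bound (hq : ‖q‖ < 1) (ha : ‖a‖ ≤ 1/2)
    (h2 : 3/2 * (‖a‖ * (1 - ‖q‖)⁻¹) ≤ 1) :
    ‖pochInf a q - 1‖ ≤ 3 * (‖a‖ * (1 - ‖q‖)⁻¹) := by
  have ha1 : ‖a‖ < 1 := lt_of_le_of_lt ha (by norm_num)
  have hgeo : Summable (fun j : ℕ => (3/2 : ℝ) * (‖a‖ * ‖q‖ ^ j)) :=
    ((summable_geometric_of_lt_one (norm_nonneg q) hq).mul_left _).mul_left _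
  have hbound := fun j => norm_log_factor_le (a := a) (q := q) ha j hq.le
  have hsumnorm : Summable (fun j : ℕ => ‖Complex.log (1 - a * q ^ j)‖) :=
    Summable.of_nonneg_of_le (fun j => norm_nonneg _) hbound hgeo
  have hL : ‖∑' j : ℕ, Complex.log (1 - a * q ^ j)‖ ≤ 3/2 * (‖a‖ * (1 - ‖q‖)⁻¹) := by
    calc ‖∑' j : ℕ, Complex.log (1 - a * q ^ j)‖
        ≤ ∑' j : ℕ, ‖Complex.log (1 - a * q ^ j)‖ := norm_tsum_le_tsum_norm hsumnorm
      _ ≤ ∑' j : ℕ, (3/2 : ℝ) * (‖a‖ * ‖q‖ ^ j) := Summable.tsum_le_tsum hbound hsumnorm hgeo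
      _ = 3/2 * (‖a‖ * (1 - ‖q‖)⁻¹) := by
          rw [tsum_mul_left, tsum_mul_left, tsum_geometric_of_lt_one (norm_nonneg q) hq]
  rw [pochInf_eq_exp hq ha1]
  have habs : ‖∑' j : ℕ, Complex.log (1 - a * q ^ j)‖ ≤ 1 := by
    exact le_trans hL h2
  have := Complex.norm_exp_sub_one_le habs
  calc ‖Complex.exp (∑' j : ℕ, Complex.log (1 - a * q ^ j)) - 1‖
      ≤ 2 * ‖∑' j : ℕ, Complex.log (1 - a * q ^ j)‖ := this
    _ ≤ 2 * (3/2 * (‖a‖ * (1 - ‖q‖)⁻¹)) := by linarith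
    _ = 3 * (‖a‖ * (1 - ‖q‖)⁻¹) := by ring

lemma tendsto_pochInf (hq : ‖q‖ < 1) :
    Filter.Tendsto (fun a : ℂ => pochInf a q) (nhds 0) (nhds 1) := by
  have hqpos : 0 < 1 - ‖q‖ := by linarith
  rw [tendsto_iff_norm_sub_tendsto_zero]
  set δ := min (1/2 : ℝ) (2/3 * (1 - ‖q‖)) with hδ
  have hδpos : 0 < δ := by positivity
  apply squeeze_zero' (Filter.Eventually.of_forall (fun a => norm_nonneg _))
    (g := fun a : ℂ => 3 * (‖a‖ * (1 - ‖q‖)⁻¹))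
  · have hmem : Metric.closedBall (0:ℂ) δ ∈ nhds (0:ℂ) := Metric.closedBall_mem_nhds _ hδpos
    filter_upwards [hmem] with a haa
    rw [Metric.mem_closedBall, dist_zero_right] at haa
    apply pochInf_sub_one_bound hq (le_trans haa (min_le_left _ _))
    have h23 : ‖a‖ ≤ 2/3 * (1 - ‖q‖) := le_trans haa (min_le_right _ _)
    rw [div_mul_eq_mul_div, div_le_one (by norm_num : (0:ℝ) < 2)]
    calc 3 * (‖a‖ * (1 - ‖q‖)⁻¹) ≤ 3 * ((2/3 * (1 - ‖q‖)) * (1 - ‖q‖)⁻¹) := by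
          apply mul_le_mul_of_nonneg_left _ (by norm_num)
          exact mul_le_mul_of_nonneg_right h23 (by positivity)
      _ = 2 := by rw [mul_inv_cancel_right₀ (ne_of_gt hqpos)]; norm_num
  · have : Filter.Tendsto (fun a : ℂ => ‖a‖) (nhds 0) (nhds 0) := by
      simpa using continuous_norm.tendsto (0:ℂ)
    simpa using (this.mul_const (1 - ‖q‖)⁻¹).const_mul 3

end Products

section Series

/-- coefficients of the ₂φ₁-type series -/
noncomputable def cc (q y : ℂ) (n : ℕ) : ℂ :=
  poch y q n * poch (q / y) q n / poch (q ^ 2) (q ^ 2) n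

variable {q y x : ℂ}

lemma normq2 (hq : ‖q‖ < 1) : ‖q ^ 2‖ < 1 := by
  rw [norm_pow]; nlinarith [norm_nonneg q]

lemma poch_den_ne_zero (hq : ‖q‖ < 1) (n : ℕ) : poch (q ^ 2) (q ^ 2) n ≠ 0 := by
  rw [poch]
  exact Finset.prod_ne_zero_iff.2 fun j _ => factor_ne_zero (normq2 hq) (normq2 hq) j

lemma poch_succ (a q : ℂ) (n : ℕ) : poch a q (n + 1) = poch a q n * (1 - a * q ^ n) :=
  Finset.prod_range_succ _ _

lemma cc_zero : cc q y 0 = 1 := by simp [cc, poch]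

lemma cc_rec (hq : ‖q‖ < 1) (n : ℕ) :
    cc q y (n + 1) * (1 - q ^ 2 * (q ^ 2) ^ n)
      = cc q y n * ((1 - y * q ^ n) * (1 - q / y * q ^ n)) := by
  have hd := poch_den_ne_zero hq n
  have hdf := factor_ne_zero (a := q ^ 2) (normq2 hq) (normq2 hq) n
  rw [cc, cc, poch_succ, poch_succ, poch_succ]
  field_simp

lemma norm_poch_le (hq : ‖q‖ < 1) (a : ℂ) (n : ℕ) :
    ‖poch a q n‖ ≤ Real.exp (‖a‖ * (1 - ‖q‖)⁻¹) := by
  have h1q : (0:ℝ) < 1 - ‖q‖ := by linarith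
  rw [poch]
  calc ‖∏ j ∈ Finset.range n, (1 - a * q ^ j)‖
      = ∏ j ∈ Finset.range n, ‖(1 : ℂ) - a * q ^ j‖ := norm_prod _ _
    _ ≤ ∏ j ∈ Finset.range n, Real.exp (‖a‖ * ‖q‖ ^ j) := by
        apply Finset.prod_le_prod (fun j _ => norm_nonneg _)
        intro j _
        calc ‖(1:ℂ) - a * q ^ j‖ ≤ ‖(1:ℂ)‖ + ‖a * q ^ j‖ := norm_sub_le _ _
          _ = 1 + ‖a‖ * ‖q‖ ^ j := by rw [norm_one, norm_mul, norm_pow]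
          _ ≤ Real.exp (‖a‖ * ‖q‖ ^ j) := by
              have := Real.add_one_le_exp (‖a‖ * ‖q‖ ^ j)
              linarith
    _ = Real.exp (∑ j ∈ Finset.range n, ‖a‖ * ‖q‖ ^ j) := (Real.exp_sum _ _).symm
    _ ≤ Real.exp (‖a‖ * (1 - ‖q‖)⁻¹) := by
        apply Real.exp_le_exp.2
        calc ∑ j ∈ Finset.range n, ‖a‖ * ‖q‖ ^ j
            ≤ ∑' j : ℕ, ‖a‖ * ‖q‖ ^ j := by
              apply Summable.sum_le_tsum _ (fun j _ => by positivity)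
              exact (summable_geometric_of_lt_one (norm_nonneg q) hq).mul_left _
          _ = ‖a‖ * (1 - ‖q‖)⁻¹ := by
              rw [tsum_mul_left, tsum_geometric_of_lt_one (norm_nonneg q) hq]

lemma exp_neg_le_one_sub {t : ℝ} (ht0 : 0 ≤ t) (ht1 : t < 1) :
    Real.exp (-(t / (1 - t))) ≤ 1 - t := by
  have h1t : (0:ℝ) < 1 - t := by linarith
  have h1 : 1 + t / (1 - t) ≤ Real.exp (t / (1 - t)) := by
    have := Real.add_one_le_exp (t / (1 - t)); linarith
  have h2 : (1 - t)⁻¹ ≤ Real.exp (t / (1 - t)) := by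
    have : 1 + t / (1 - t) = (1 - t)⁻¹ := by field_simp; ring
    linarith
  rw [Real.exp_neg]
  exact inv_le_of_inv_le₀ h1t h2

lemma norm_poch_ge (hq : ‖q‖ < 1) (ha : ‖a‖ < 1) (n : ℕ) :
    Real.exp (-(‖a‖ * (1 - ‖a‖)⁻¹ * (1 - ‖q‖)⁻¹)) ≤ ‖poch a q n‖ := by
  have h1q : (0:ℝ) < 1 - ‖q‖ := by linarith
  have h1a : (0:ℝ) < 1 - ‖a‖ := by linarith
  rw [poch]
  have key : ∀ j : ℕ, Real.exp (-(‖a‖ * ‖q‖ ^ j * (1 - ‖a‖)⁻¹)) ≤ ‖(1:ℂ) - a * q ^ j‖ := by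
    intro j
    have htj : ‖a‖ * ‖q‖ ^ j ≤ ‖a‖ := by
      calc ‖a‖ * ‖q‖ ^ j ≤ ‖a‖ * 1 :=
            mul_le_mul_of_nonneg_left (pow_le_one₀ (norm_nonneg q) hq.le) (norm_nonneg a)
        _ = ‖a‖ := mul_one _
    have ht0 : 0 ≤ ‖a‖ * ‖q‖ ^ j := by positivity
    have ht1 : ‖a‖ * ‖q‖ ^ j < 1 := lt_of_le_of_lt htj ha
    calc Real.exp (-(‖a‖ * ‖q‖ ^ j * (1 - ‖a‖)⁻¹))
        ≤ Real.exp (-((‖a‖ * ‖q‖ ^ j) / (1 - ‖a‖ * ‖q‖ ^ j))) := by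
          apply Real.exp_le_exp.2
          rw [neg_le_neg_iff, div_eq_mul_inv]
          apply mul_le_mul_of_nonneg_left _ ht0
          apply inv_anti₀ (by linarith)
          linarith
      _ ≤ 1 - ‖a‖ * ‖q‖ ^ j := exp_neg_le_one_sub ht0 ht1
      _ ≤ ‖(1:ℂ) - a * q ^ j‖ := by
          have h := norm_sub_norm_le (1:ℂ) (a * q ^ j)
          rw [norm_one, norm_mul, norm_pow] at h
          exact h
  calc Real.exp (-(‖a‖ * (1 - ‖a‖)⁻¹ * (1 - ‖q‖)⁻¹))
      ≤ Real.exp (-∑ j ∈ Finset.range n, ‖a‖ * ‖q‖ ^ j * (1 - ‖a‖)⁻¹) := by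
        apply Real.exp_le_exp.2
        rw [neg_le_neg_iff]
        calc ∑ j ∈ Finset.range n, ‖a‖ * ‖q‖ ^ j * (1 - ‖a‖)⁻¹
            = (∑ j ∈ Finset.range n, ‖a‖ * ‖q‖ ^ j) * (1 - ‖a‖)⁻¹ := by
              rw [Finset.sum_mul]
          _ ≤ (‖a‖ * (1 - ‖q‖)⁻¹) * (1 - ‖a‖)⁻¹ := by
              apply mul_le_mul_of_nonneg_right _ (by positivity)
              calc ∑ j ∈ Finset.range n, ‖a‖ * ‖q‖ ^ j
                  ≤ ∑' j : ℕ, ‖a‖ * ‖q‖ ^ j := by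
                    apply Summable.sum_le_tsum _ (fun j _ => by positivity)
                    exact (summable_geometric_of_lt_one (norm_nonneg q) hq).mul_left _
                _ = ‖a‖ * (1 - ‖q‖)⁻¹ := by
                    rw [tsum_mul_left, tsum_geometric_of_lt_one (norm_nonneg q) hq]
          _ = ‖a‖ * (1 - ‖a‖)⁻¹ * (1 - ‖q‖)⁻¹ := by ring
    _ = ∏ j ∈ Finset.range n, Real.exp (-(‖a‖ * ‖q‖ ^ j * (1 - ‖a‖)⁻¹)) := by
        rw [← Real.exp_sum, Finset.sum_neg_distrib]
    _ ≤ ∏ j ∈ Finset.range n, ‖(1:ℂ) - a * q ^ j‖ := by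
        apply Finset.prod_le_prod (fun j _ => (Real.exp_pos _).le) (fun j _ => key j)
    _ = ‖∏ j ∈ Finset.range n, (1 - a * q ^ j)‖ := (norm_prod _ _).symm

lemma cc_bound (hq : ‖q‖ < 1) :
    ∃ C : ℝ, 0 < C ∧ ∀ n, ‖cc q y n‖ ≤ C := by
  have h1q : (0:ℝ) < 1 - ‖q‖ := by linarith
  set W := Real.exp (-(‖(q:ℂ)^2‖ * (1 - ‖(q:ℂ)^2‖)⁻¹ * (1 - ‖(q:ℂ)^2‖)⁻¹)) with hW
  refine ⟨Real.exp (‖y‖ * (1 - ‖q‖)⁻¹) * Real.exp (‖q / y‖ * (1 - ‖q‖)⁻¹) / W,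
    by positivity, fun n => ?_⟩
  have hWpos : 0 < W := Real.exp_pos _
  rw [cc, norm_div, norm_mul]
  apply div_le_div₀ (by positivity)
  · exact mul_le_mul (norm_poch_le hq y n) (norm_poch_le hq (q / y) n)
      (norm_nonneg _) (Real.exp_pos _).le
  · exact hWpos
  · exact norm_poch_ge (normq2 hq) (normq2 hq) n

end Series

section FE

variable {q y x : ℂ}

lemma summable_base (hC : ∀ n, ‖cc q y n‖ ≤ C) {e : ℂ} (he : ‖e‖ < 1) :
    Summable (fun n => cc q y n * e ^ n) := by
  apply Summable.of_norm_bounded ((summable_geometric_of_lt_one (norm_nonneg e) he).mul_left C)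
  intro n
  rw [norm_mul, norm_pow]
  exact mul_le_mul_of_nonneg_right (hC n) (by positivity)

lemma S_fe (hq : ‖q‖ < 1) (hy : y ≠ 0) (hx : ‖x‖ < 1) :
    (1 + x) * ∑' n : ℕ, cc q y n * (-x) ^ n
      = x * (y + q / y) * ∑' n : ℕ, cc q y n * (-(x * q)) ^ n
        + (1 - x * q) * ∑' n : ℕ, cc q y n * (-(x * q ^ 2)) ^ n := by
  obtain ⟨C, hC0, hC⟩ := cc_bound (y := y) hq
  have hq0 : (0:ℝ) ≤ ‖q‖ := norm_nonneg q
  have hx0 : (0:ℝ) ≤ ‖x‖ := norm_nonneg x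
  have hnx : ‖-x‖ < 1 := by rwa [norm_neg]
  have hnxq : ‖-(x * q)‖ < 1 := by rw [norm_neg, norm_mul]; nlinarith
  have hnxq2 : ‖-(x * q ^ 2)‖ < 1 := by
    rw [norm_neg, norm_mul, norm_pow]; nlinarith
  have h1 := summable_base hC hnx
  have h2 := summable_base hC hnxq
  have h3 := summable_base hC hnxq2
  have h1s : Summable (fun n => cc q y (n+1) * (-x) ^ (n+1)) :=
    (summable_nat_add_iff 1).2 h1
  have h3s : Summable (fun n => cc q y (n+1) * (-(x * q ^ 2)) ^ (n+1)) :=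
    (summable_nat_add_iff 1).2 h3
  have hL : (1 + x) * ∑' n : ℕ, cc q y n * (-x) ^ n
      = 1 + ∑' n : ℕ, (cc q y (n+1) * (-x) ^ (n+1) + x * (cc q y n * (-x) ^ n)) := by
    calc (1 + x) * ∑' n : ℕ, cc q y n * (-x) ^ n
        = (∑' n : ℕ, cc q y n * (-x) ^ n) + x * ∑' n : ℕ, cc q y n * (-x) ^ n := by ring
      _ = (cc q y 0 * (-x) ^ 0 + ∑' n : ℕ, cc q y (n+1) * (-x) ^ (n+1))
          + ∑' n : ℕ, x * (cc q y n * (-x) ^ n) := by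
          rw [tsum_mul_left]
          nth_rewrite 1 [Summable.tsum_eq_zero_add h1]
          rfl
      _ = 1 + ((∑' n : ℕ, cc q y (n+1) * (-x) ^ (n+1))
          + ∑' n : ℕ, x * (cc q y n * (-x) ^ n)) := by
          rw [cc_zero]; ring
      _ = 1 + ∑' n : ℕ, (cc q y (n+1) * (-x) ^ (n+1) + x * (cc q y n * (-x) ^ n)) := by
          rw [Summable.tsum_add h1s (h1.mul_left x)]
  have hR : x * (y + q / y) * (∑' n : ℕ, cc q y n * (-(x * q)) ^ n)
      + (1 - x * q) * ∑' n : ℕ, cc q y n * (-(x * q ^ 2)) ^ n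
      = 1 + ∑' n : ℕ, ((x * (y + q / y)) * (cc q y n * (-(x * q)) ^ n)
          + (cc q y (n+1) * (-(x * q ^ 2)) ^ (n+1)
            + (-(x * q)) * (cc q y n * (-(x * q ^ 2)) ^ n))) := by
    calc x * (y + q / y) * (∑' n : ℕ, cc q y n * (-(x * q)) ^ n)
        + (1 - x * q) * ∑' n : ℕ, cc q y n * (-(x * q ^ 2)) ^ n
        = (∑' n : ℕ, (x * (y + q / y)) * (cc q y n * (-(x * q)) ^ n))
          + ((∑' n : ℕ, cc q y n * (-(x * q ^ 2)) ^ n)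
            + ∑' n : ℕ, (-(x * q)) * (cc q y n * (-(x * q ^ 2)) ^ n)) := by
          rw [tsum_mul_left, tsum_mul_left]; ring
      _ = (∑' n : ℕ, (x * (y + q / y)) * (cc q y n * (-(x * q)) ^ n))
          + ((cc q y 0 * (-(x * q ^ 2)) ^ 0 + ∑' n : ℕ, cc q y (n+1) * (-(x * q ^ 2)) ^ (n+1))
            + ∑' n : ℕ, (-(x * q)) * (cc q y n * (-(x * q ^ 2)) ^ n)) := by
          rw [Summable.tsum_eq_zero_add h3]
      _ = 1 + ((∑' n : ℕ, (x * (y + q / y)) * (cc q y n * (-(x * q)) ^ n))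
          + ((∑' n : ℕ, cc q y (n+1) * (-(x * q ^ 2)) ^ (n+1))
            + ∑' n : ℕ, (-(x * q)) * (cc q y n * (-(x * q ^ 2)) ^ n))) := by
          rw [cc_zero]; ring
      _ = 1 + ∑' n : ℕ, ((x * (y + q / y)) * (cc q y n * (-(x * q)) ^ n)
          + (cc q y (n+1) * (-(x * q ^ 2)) ^ (n+1)
            + (-(x * q)) * (cc q y n * (-(x * q ^ 2)) ^ n))) := by
          rw [Summable.tsum_add (h2.mul_left (x * (y + q / y))) (h3s.add (h3.mul_left (-(x * q)))),
            Summable.tsum_add h3s (h3.mul_left (-(x * q)))]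
  rw [hL, hR]
  congr 1
  apply tsum_congr
  intro n
  have hyw : y * (q / y) = q := mul_div_cancel₀ q hy
  have hrec := cc_rec (y := y) hq n
  have e5 : ((q:ℂ) ^ 2) ^ n = q ^ n * q ^ n := by
    rw [← pow_mul, two_mul, pow_add]
  rw [e5] at hrec
  have e1 : (-(x * q)) ^ n = (-x) ^ n * q ^ n := by
    rw [show -(x * q) = (-x) * q by ring, mul_pow]
  have e2 : (-(x * q ^ 2)) ^ n = (-x) ^ n * (q ^ n * q ^ n) := by
    rw [show -(x * q ^ 2) = (-x) * (q * q) by ring, mul_pow, mul_pow]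
  have e3 : (-(x * q ^ 2)) ^ (n + 1) = ((-x) ^ n * (q ^ n * q ^ n)) * (-(x * q ^ 2)) := by
    rw [pow_succ, e2]
  have e4 : (-x) ^ (n + 1) = (-x) ^ n * (-x) := pow_succ _ _
  rw [e1, e2, e3, e4]
  linear_combination (-(x * (-x) ^ n)) * hrec
    - (x * (-x) ^ n * cc q y n * q ^ n * q ^ n) * hyw

lemma S_tendsto (hq : ‖q‖ < 1) :
    Filter.Tendsto (fun x : ℂ => ∑' n : ℕ, cc q y n * (-x) ^ n) (nhds 0) (nhds 1) := by
  obtain ⟨C, hC0, hC⟩ := cc_bound (y := y) hq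
  rw [tendsto_iff_norm_sub_tendsto_zero]
  apply squeeze_zero' (g := fun x : ℂ => 2 * C * ‖x‖)
    (Filter.Eventually.of_forall (fun a => norm_nonneg _))
  · have hmem : Metric.closedBall (0:ℂ) (1/2) ∈ nhds (0:ℂ) :=
      Metric.closedBall_mem_nhds _ (by norm_num)
    filter_upwards [hmem] with x hxmem
    rw [Metric.mem_closedBall, dist_zero_right] at hxmem
    have hx1 : ‖x‖ < 1 := lt_of_le_of_lt hxmem (by norm_num)
    have hnx : ‖-x‖ < 1 := by rwa [norm_neg]
    have h1 := summable_base hC hnx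
    have hpeel : (∑' n : ℕ, cc q y n * (-x) ^ n) - 1
        = ∑' n : ℕ, cc q y (n+1) * (-x) ^ (n+1) := by
      rw [Summable.tsum_eq_zero_add h1, cc_zero]
      ring
    rw [hpeel]
    have hhalf : Summable (fun n : ℕ => C * ‖x‖ * (1/2 : ℝ) ^ n) :=
      (summable_geometric_of_lt_one (by norm_num) (by norm_num)).mul_left _
    have hbnd : ∀ n : ℕ, ‖cc q y (n+1) * (-x) ^ (n+1)‖ ≤ C * ‖x‖ * (1/2:ℝ) ^ n := by
      intro n
      rw [norm_mul, norm_pow, norm_neg, pow_succ]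
      calc ‖cc q y (n+1)‖ * (‖x‖ ^ n * ‖x‖) ≤ C * (‖x‖ ^ n * ‖x‖) := by
            apply mul_le_mul_of_nonneg_right (hC _) (by positivity)
        _ = C * ‖x‖ * ‖x‖ ^ n := by ring
        _ ≤ C * ‖x‖ * (1/2:ℝ) ^ n := by
            apply mul_le_mul_of_nonneg_left _ (by positivity)
            exact pow_le_pow_left₀ (norm_nonneg x) hxmem n
    calc ‖∑' n : ℕ, cc q y (n+1) * (-x) ^ (n+1)‖
        ≤ ∑' n : ℕ, ‖cc q y (n+1) * (-x) ^ (n+1)‖ :=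
          norm_tsum_le_tsum_norm (Summable.of_nonneg_of_le (fun n => norm_nonneg _) hbnd hhalf)
      _ ≤ ∑' n : ℕ, C * ‖x‖ * (1/2:ℝ) ^ n :=
          Summable.tsum_le_tsum hbnd (Summable.of_nonneg_of_le (fun n => norm_nonneg _) hbnd hhalf) hhalf
      _ = C * ‖x‖ * 2 := by
          rw [tsum_mul_left, tsum_geometric_of_lt_one (by norm_num) (by norm_num)]
          norm_num
      _ = 2 * C * ‖x‖ := by ring
  · have : Filter.Tendsto (fun x : ℂ => ‖x‖) (nhds 0) (nhds 0) := by
      simpa using continuous_norm.tendsto (0:ℂ)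
    simpa using this.const_mul (2 * C)

end FE

section GG

noncomputable def GG (q y : ℂ) : ℂ → ℂ := fun t =>
  pochInf (-t) q / pochInf (t * q) q * ∑' n : ℕ, cc q y n * (-t) ^ n

variable {q y : ℂ}

lemma one_add_ne_zero' {x : ℂ} (hx : ‖x‖ < 1) : (1 : ℂ) + x ≠ 0 := by
  intro h
  have hx1 : x = -1 := by linear_combination h
  rw [hx1] at hx
  simp at hx

lemma one_sub_ne_zero' {x : ℂ} (hx : ‖x‖ < 1) : (1 : ℂ) - x ≠ 0 := by
  intro h
  have hx1 : x = 1 := by linear_combination -h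
  rw [hx1] at hx
  simp at hx

lemma GG_fe (hq : ‖q‖ < 1) (hy : y ≠ 0) {x : ℂ} (hx : ‖x‖ < 1) :
    GG q y x = (x * y + x * q / y) / (1 - x * q) * GG q y (x * q) +
      (1 + x * q) / (1 - x * q ^ 2) * GG q y (x * q ^ 2) := by
  have hq0 : (0:ℝ) ≤ ‖q‖ := norm_nonneg q
  have hx0 : (0:ℝ) ≤ ‖x‖ := norm_nonneg x
  have hxq : ‖x * q‖ < 1 := by rw [norm_mul]; nlinarith
  have hxq2 : ‖x * q ^ 2‖ < 1 := by rw [norm_mul, norm_pow]; nlinarith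
  have hxqq : ‖x * q * q‖ < 1 := by
    rw [norm_mul, norm_mul]
    nlinarith [mul_le_one₀ hx.le hq0 hq.le, norm_nonneg (x*q)]
  have hxq2q : ‖x * q ^ 2 * q‖ < 1 := by
    rw [norm_mul]
    nlinarith [norm_nonneg (x * q ^ 2)]
  have h1x : (1:ℂ) + x ≠ 0 := one_add_ne_zero' hx
  have h1xq : (1:ℂ) - x * q ≠ 0 := one_sub_ne_zero' hxq
  have h1xq2 : (1:ℂ) - x * q ^ 2 ≠ 0 := one_sub_ne_zero' hxq2
  have hnegx : ‖-x‖ < 1 := by rwa [norm_neg]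
  have hnegxq : ‖-(x * q)‖ < 1 := by rwa [norm_neg]
  -- peel identities for numerators
  have hN1 : pochInf (-x) q = (1 + x) * pochInf (-(x * q)) q := by
    have h := pochInf_peel hq hnegx
    rw [h, show (1:ℂ) - -x = 1 + x by ring, show -x * q = -(x * q) by ring]
  have hN2 : pochInf (-(x * q)) q = (1 + x * q) * pochInf (-(x * q ^ 2)) q := by
    have h := pochInf_peel hq hnegxq
    rw [h, show (1:ℂ) - -(x * q) = 1 + x * q by ring,
      show -(x * q) * q = -(x * q ^ 2) by ring]
  -- peel identities for denominators
  have hD1 : pochInf (x * q) q = (1 - x * q) * pochInf (x * q * q) q :=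
    pochInf_peel hq hxq
  have hD2 : pochInf (x * q * q) q = (1 - x * q ^ 2) * pochInf (x * q ^ 2 * q) q := by
    have h := pochInf_peel hq hxqq
    rw [h, show (1:ℂ) - x * q * q = 1 - x * q ^ 2 by ring,
      show x * q * q * q = x * q ^ 2 * q by ring]
  have hDne : pochInf (x * q ^ 2 * q) q ≠ 0 := pochInf_ne_zero hq hxq2q
  have hSfe := S_fe (y := y) hq hy hx
  have hs0 : (∑' n : ℕ, cc q y n * (-x) ^ n)
      = (x * (y + q / y) * (∑' n : ℕ, cc q y n * (-(x * q)) ^ n)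
        + (1 - x * q) * ∑' n : ℕ, cc q y n * (-(x * q ^ 2)) ^ n) / (1 + x) := by
    rw [eq_div_iff h1x]
    linear_combination hSfe
  show pochInf (-x) q / pochInf (x * q) q * ∑' n : ℕ, cc q y n * (-x) ^ n = _
  rw [hs0, hN1, hN2, hD1, hD2]
  show _ = _ * (pochInf (-(x * q)) q / pochInf (x * q * q) q * _)
      + _ * (pochInf (-(x * q ^ 2)) q / pochInf (x * q ^ 2 * q) q * _)
  rw [hN2, hD2]
  field_simp

lemma GG_tendsto (hq : ‖q‖ < 1) :
    Filter.Tendsto (GG q y) (nhds 0) (nhds 1) := by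
  have hneg : Filter.Tendsto (fun t : ℂ => -t) (nhds 0) (nhds 0) := by
    simpa using (continuous_neg (G := ℂ)).tendsto (0 : ℂ)
  have hmulq : Filter.Tendsto (fun t : ℂ => t * q) (nhds 0) (nhds 0) := by
    simpa using ((continuous_mul_right q).tendsto (0 : ℂ))
  have hN : Filter.Tendsto (fun t : ℂ => pochInf (-t) q) (nhds 0) (nhds 1) :=
    (tendsto_pochInf hq).comp hneg
  have hD : Filter.Tendsto (fun t : ℂ => pochInf (t * q) q) (nhds 0) (nhds 1) :=
    (tendsto_pochInf hq).comp hmulq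
  have hS : Filter.Tendsto (fun t : ℂ => ∑' n : ℕ, cc q y n * (-t) ^ n)
      (nhds 0) (nhds 1) := S_tendsto hq
  have := (hN.div hD one_ne_zero).mul hS
  unfold GG
  simpa using this

end GG

/-- Proposition 2.2 (first form): the unique analytic solution of the q-difference equation
is given by a `₂φ₁`-type series. -/
theorem F_qdiff_solution (q y : ℂ) (hq0 : 0 < ‖q‖) (hq1 : ‖q‖ < 1) (hy : y ≠ 0)
    (F : ℂ → ℂ) (hF : AnalyticOnNhd ℂ F (Metric.ball 0 1)) (hF0 : F 0 = 1)
    (hFeq : ∀ x ∈ Metric.ball (0 : ℂ) 1,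
      F x = (x * y + x * q / y) / (1 - x * q) * F (x * q) +
        (1 + x * q) / (1 - x * q ^ 2) * F (x * q ^ 2)) :
    ∀ x ∈ Metric.ball (0 : ℂ) 1,
      F x = pochInf (-x) q / pochInf (x * q) q *
        ∑' n : ℕ, poch y q n * poch (q / y) q n * (-x) ^ n / poch (q ^ 2) (q ^ 2) n := by
  intro x₀ hx₀
  rw [mem_ball_zero_iff] at hx₀
  set E : ℂ → ℂ := fun t => F t - GG q y t with hEdef
  have hEfe : ∀ x : ℂ, ‖x‖ < 1 → E x = (x * y + x * q / y) / (1 - x * q) * E (x * q) +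
      (1 + x * q) / (1 - x * q ^ 2) * E (x * q ^ 2) := by
    intro x hx
    have h1 := hFeq x (mem_ball_zero_iff.2 hx)
    have h2 := GG_fe hq1 hy hx
    simp only [hEdef]
    rw [h1, h2]; ring
  have hEtend : Filter.Tendsto E (nhds 0) (nhds 0) := by
    have hFc : Filter.Tendsto F (nhds 0) (nhds 1) := by
      have := (hF 0 (by simp)).continuousAt
      rwa [ContinuousAt, hF0] at this
    simpa [hEdef] using hFc.sub (GG_tendsto (y := y) hq1)
  have hQ0 : 0 ≤ ‖q‖ := norm_nonneg q
  have h1Q : (0:ℝ) < 1 - ‖q‖ := by linarith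
  have h1Q2 : (0:ℝ) < 1 - ‖q‖ ^ 2 := by nlinarith
  set K1 := (‖y‖ + ‖q‖ / ‖y‖) * (1 - ‖q‖)⁻¹ with hK1def
  set K2 := 2 * (1 - ‖q‖ ^ 2)⁻¹ with hK2def
  set K := K1 + K2 with hKdef
  have hK1 : 0 ≤ K1 := by positivity
  have hK2 : 0 ≤ K2 := by positivity
  have hK : 0 ≤ K := by positivity
  set r := ‖x₀‖ with hrdef
  have hr1 : r < 1 := hx₀
  have hr0 : 0 ≤ r := norm_nonneg x₀
  set M : ℕ → ENNReal := fun n => ⨆ x : {x : ℂ // ‖x‖ ≤ r * ‖q‖ ^ n},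
    ENNReal.ofReal ‖E x.1‖ with hMdef
  -- the one-step inequality
  have hstep : ∀ n : ℕ, M n ≤ ENNReal.ofReal (1 + K * ‖q‖ ^ n) * M (n + 1) := by
    intro n
    rw [hMdef]
    apply iSup_le
    rintro ⟨x, hxr⟩
    simp only
    have hrQn : r * ‖q‖ ^ n ≤ r := by
      apply mul_le_of_le_one_right hr0 (pow_le_one₀ hQ0 hq1.le)
    have hx1 : ‖x‖ < 1 := lt_of_le_of_lt (le_trans hxr hrQn) hr1
    have hxq : ‖x * q‖ ≤ r * ‖q‖ ^ (n + 1) := by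
      rw [norm_mul, pow_succ, ← mul_assoc]
      exact mul_le_mul_of_nonneg_right hxr hQ0
    have hxq2 : ‖x * q ^ 2‖ ≤ r * ‖q‖ ^ (n + 1) := by
      rw [norm_mul, norm_pow]
      calc ‖x‖ * ‖q‖ ^ 2 = (‖x‖ * ‖q‖) * ‖q‖ := by ring
        _ ≤ (r * ‖q‖ ^ n * ‖q‖) * 1 := by
            apply mul_le_mul (mul_le_mul_of_nonneg_right hxr hQ0) hq1.le hQ0
            positivity
        _ = r * ‖q‖ ^ (n + 1) := by rw [pow_succ]; ring
    have hm1 : ENNReal.ofReal ‖E (x * q)‖ ≤ M (n + 1) := le_iSup_of_le ⟨x * q, hxq⟩ le_rfl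
    have hm2 : ENNReal.ofReal ‖E (x * q ^ 2)‖ ≤ M (n + 1) := le_iSup_of_le ⟨x * q ^ 2, hxq2⟩ le_rfl
    -- real norm bounds on the coefficients
    have hA : ‖(x * y + x * q / y) / (1 - x * q)‖ ≤ K1 * ‖x‖ := by
      rw [norm_div]
      have hnum : ‖x * y + x * q / y‖ ≤ ‖x‖ * (‖y‖ + ‖q‖ / ‖y‖) := by
        calc ‖x * y + x * q / y‖ ≤ ‖x * y‖ + ‖x * q / y‖ := norm_add_le _ _
          _ = ‖x‖ * ‖y‖ + ‖x‖ * ‖q‖ / ‖y‖ := by rw [norm_mul, norm_div, norm_mul]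
          _ = ‖x‖ * (‖y‖ + ‖q‖ / ‖y‖) := by ring
      have hden : 1 - ‖q‖ ≤ ‖1 - x * q‖ := by
        have h := norm_sub_norm_le (1:ℂ) (x * q)
        rw [norm_one, norm_mul] at h
        nlinarith [norm_nonneg q]
      calc ‖x * y + x * q / y‖ / ‖1 - x * q‖
          ≤ ‖x‖ * (‖y‖ + ‖q‖ / ‖y‖) / (1 - ‖q‖) := by
            apply div_le_div₀ (by positivity) hnum h1Q hden
        _ = K1 * ‖x‖ := by rw [hK1def, div_eq_mul_inv]; ring
    have hB : ‖(1 + x * q) / (1 - x * q ^ 2)‖ ≤ 1 + K2 * ‖x‖ := by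
      rw [norm_div]
      have hnum : ‖1 + x * q‖ ≤ 1 + ‖x‖ * ‖q‖ := by
        have h := norm_add_le (1:ℂ) (x * q)
        rwa [norm_one, norm_mul] at h
      have hden : 1 - ‖x‖ * ‖q‖ ^ 2 ≤ ‖1 - x * q ^ 2‖ := by
        have h := norm_sub_norm_le (1:ℂ) (x * q ^ 2)
        rwa [norm_one, norm_mul, norm_pow] at h
      have hdenpos : (0:ℝ) < 1 - ‖x‖ * ‖q‖ ^ 2 := by nlinarith [norm_nonneg x]
      have hinv : (1 - ‖q‖ ^ 2) * (1 - ‖q‖ ^ 2)⁻¹ = 1 := mul_inv_cancel₀ (ne_of_gt h1Q2)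
      calc ‖1 + x * q‖ / ‖1 - x * q ^ 2‖
          ≤ (1 + ‖x‖ * ‖q‖) / (1 - ‖x‖ * ‖q‖ ^ 2) := by
            apply div_le_div₀ (by positivity) hnum hdenpos hden
        _ ≤ 1 + K2 * ‖x‖ := by
            rw [div_le_iff₀ hdenpos]
            have hkey : 2 ≤ K2 * (1 - ‖x‖ * ‖q‖ ^ 2) := by
              have hq2le : ‖x‖ * ‖q‖ ^ 2 ≤ ‖q‖ ^ 2 := by
                nlinarith [pow_nonneg hQ0 2, hx1.le]
              calc (2:ℝ) = K2 * (1 - ‖q‖ ^ 2) := by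
                    rw [hK2def, mul_assoc, inv_mul_cancel₀ (ne_of_gt h1Q2), mul_one]
                _ ≤ K2 * (1 - ‖x‖ * ‖q‖ ^ 2) := by
                    apply mul_le_mul_of_nonneg_left _ hK2
                    linarith
            nlinarith [mul_le_mul_of_nonneg_left hkey (norm_nonneg x),
              mul_nonneg (norm_nonneg x) hQ0,
              mul_le_mul_of_nonneg_left hq1.le (mul_nonneg (norm_nonneg x) hQ0),
              mul_le_mul_of_nonneg_left hq1.le (norm_nonneg x)]
    have hreal : ‖E x‖ ≤ K1 * ‖x‖ * ‖E (x * q)‖ + (1 + K2 * ‖x‖) * ‖E (x * q ^ 2)‖ := by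
      rw [hEfe x hx1]
      calc ‖(x * y + x * q / y) / (1 - x * q) * E (x * q) +
            (1 + x * q) / (1 - x * q ^ 2) * E (x * q ^ 2)‖
          ≤ ‖(x * y + x * q / y) / (1 - x * q) * E (x * q)‖ +
            ‖(1 + x * q) / (1 - x * q ^ 2) * E (x * q ^ 2)‖ := norm_add_le _ _
        _ = ‖(x * y + x * q / y) / (1 - x * q)‖ * ‖E (x * q)‖ +
            ‖(1 + x * q) / (1 - x * q ^ 2)‖ * ‖E (x * q ^ 2)‖ := by rw [norm_mul, norm_mul]
        _ ≤ K1 * ‖x‖ * ‖E (x * q)‖ + (1 + K2 * ‖x‖) * ‖E (x * q ^ 2)‖ := by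
            apply add_le_add
            · exact mul_le_mul_of_nonneg_right hA (norm_nonneg _)
            · exact mul_le_mul_of_nonneg_right hB (norm_nonneg _)
    have hfinal : K1 * ‖x‖ + (1 + K2 * ‖x‖) ≤ 1 + K * ‖q‖ ^ n := by
      have h1 : K * ‖x‖ ≤ K * (r * ‖q‖ ^ n) := mul_le_mul_of_nonneg_left hxr hK
      have h2 : K * (r * ‖q‖ ^ n) ≤ K * ‖q‖ ^ n := by
        nlinarith [mul_nonneg hK (pow_nonneg hQ0 n), pow_nonneg hQ0 n]
      rw [hKdef] at *
      nlinarith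
    calc ENNReal.ofReal ‖E x‖
        ≤ ENNReal.ofReal (K1 * ‖x‖ * ‖E (x * q)‖ + (1 + K2 * ‖x‖) * ‖E (x * q ^ 2)‖) :=
          ENNReal.ofReal_le_ofReal hreal
      _ = ENNReal.ofReal (K1 * ‖x‖) * ENNReal.ofReal ‖E (x * q)‖ +
          ENNReal.ofReal (1 + K2 * ‖x‖) * ENNReal.ofReal ‖E (x * q ^ 2)‖ := by
          rw [ENNReal.ofReal_add (by positivity) (by positivity),
            ENNReal.ofReal_mul (p := K1 * ‖x‖) (q := ‖E (x * q)‖) (by positivity),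
            ENNReal.ofReal_mul (p := 1 + K2 * ‖x‖) (q := ‖E (x * q ^ 2)‖) (by positivity)]
      _ ≤ ENNReal.ofReal (K1 * ‖x‖) * M (n + 1) + ENNReal.ofReal (1 + K2 * ‖x‖) * M (n + 1) :=
          add_le_add (mul_le_mul_right hm1 _) (mul_le_mul_right hm2 _)
      _ = (ENNReal.ofReal (K1 * ‖x‖) + ENNReal.ofReal (1 + K2 * ‖x‖)) * M (n + 1) :=
          (add_mul _ _ _).symm
      _ = ENNReal.ofReal (K1 * ‖x‖ + (1 + K2 * ‖x‖)) * M (n + 1) := by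
          rw [← ENNReal.ofReal_add (by positivity) (by positivity)]
      _ ≤ ENNReal.ofReal (1 + K * ‖q‖ ^ n) * M (n + 1) :=
          mul_le_mul_left (ENNReal.ofReal_le_ofReal hfinal) _
  -- chaining
  have hprodbound : ∀ n : ℕ, ∏ j ∈ Finset.range n, (1 + K * ‖q‖ ^ j)
      ≤ Real.exp (K * (1 - ‖q‖)⁻¹) := by
    intro n
    calc ∏ j ∈ Finset.range n, (1 + K * ‖q‖ ^ j)
        ≤ ∏ j ∈ Finset.range n, Real.exp (K * ‖q‖ ^ j) := by
          apply Finset.prod_le_prod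
          · intro j _; positivity
          · intro j _
            have := Real.add_one_le_exp (K * ‖q‖ ^ j)
            linarith
      _ = Real.exp (∑ j ∈ Finset.range n, K * ‖q‖ ^ j) := (Real.exp_sum _ _).symm
      _ ≤ Real.exp (K * (1 - ‖q‖)⁻¹) := by
          apply Real.exp_le_exp.2
          calc ∑ j ∈ Finset.range n, K * ‖q‖ ^ j
              ≤ ∑' j : ℕ, K * ‖q‖ ^ j := by
                apply Summable.sum_le_tsum _ (fun j _ => by positivity)
                exact (summable_geometric_of_lt_one hQ0 hq1).mul_left _
            _ = K * (1 - ‖q‖)⁻¹ := by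
                rw [tsum_mul_left, tsum_geometric_of_lt_one hQ0 hq1]
  have hchain : ∀ n : ℕ, M 0 ≤ ENNReal.ofReal (Real.exp (K * (1 - ‖q‖)⁻¹)) * M n := by
    have haux : ∀ n : ℕ, M 0 ≤ ENNReal.ofReal (∏ j ∈ Finset.range n, (1 + K * ‖q‖ ^ j)) * M n := by
      intro n
      induction n with
      | zero =>
        simp only [Finset.range_zero, Finset.prod_empty, ENNReal.ofReal_one, one_mul, le_refl]
      | succ n ih =>
        calc M 0 ≤ ENNReal.ofReal (∏ j ∈ Finset.range n, (1 + K * ‖q‖ ^ j)) * M n := ih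
          _ ≤ ENNReal.ofReal (∏ j ∈ Finset.range n, (1 + K * ‖q‖ ^ j)) *
              (ENNReal.ofReal (1 + K * ‖q‖ ^ n) * M (n + 1)) := mul_le_mul_right (hstep n) _
          _ = ENNReal.ofReal (∏ j ∈ Finset.range (n + 1), (1 + K * ‖q‖ ^ j)) * M (n + 1) := by
              rw [← mul_assoc, ← ENNReal.ofReal_mul (Finset.prod_nonneg (fun j _ => by positivity)),
                Finset.prod_range_succ]
    intro n
    refine le_trans (haux n) (mul_le_mul_left (ENNReal.ofReal_le_ofReal (hprodbound n)) _)
  -- tail estimate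
  have htail : ∀ ε : ℝ, 0 < ε → ∃ n : ℕ, M n ≤ ENNReal.ofReal ε := by
    intro ε hε
    obtain ⟨δ, hδpos, hδ⟩ := Metric.tendsto_nhds_nhds.1 hEtend ε hε
    have htp : Filter.Tendsto (fun n : ℕ => r * ‖q‖ ^ n) Filter.atTop (nhds 0) := by
      simpa using (tendsto_pow_atTop_nhds_zero_of_lt_one hQ0 hq1).const_mul r
    obtain ⟨n, hn⟩ := (htp.eventually (gt_mem_nhds hδpos)).exists
    refine ⟨n, ?_⟩
    rw [hMdef]
    apply iSup_le
    rintro ⟨x, hxr⟩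
    simp only
    have hd : dist x 0 < δ := by
      rw [dist_zero_right]
      exact lt_of_le_of_lt hxr hn
    have := hδ hd
    rw [dist_zero_right] at this
    exact ENNReal.ofReal_le_ofReal this.le
  -- conclusion : E x₀ = 0
  have hEzero : E x₀ = 0 := by
    have hle : ∀ ε : ℝ, 0 < ε → ‖E x₀‖ ≤ Real.exp (K * (1 - ‖q‖)⁻¹) * ε := by
      intro ε hε
      obtain ⟨n, hn⟩ := htail ε hε
      have h0 : ENNReal.ofReal ‖E x₀‖ ≤ M 0 := by
        rw [hMdef]
        exact le_iSup_of_le ⟨x₀, by simp [hrdef]⟩ le_rfl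
      have h1 : ENNReal.ofReal ‖E x₀‖ ≤ ENNReal.ofReal (Real.exp (K * (1 - ‖q‖)⁻¹) * ε) := by
        calc ENNReal.ofReal ‖E x₀‖ ≤ M 0 := h0
          _ ≤ ENNReal.ofReal (Real.exp (K * (1 - ‖q‖)⁻¹)) * M n := hchain n
          _ ≤ ENNReal.ofReal (Real.exp (K * (1 - ‖q‖)⁻¹)) * ENNReal.ofReal ε :=
              mul_le_mul_right hn _
          _ = ENNReal.ofReal (Real.exp (K * (1 - ‖q‖)⁻¹) * ε) :=
              (ENNReal.ofReal_mul (Real.exp_pos _).le).symm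
      exact (ENNReal.ofReal_le_ofReal_iff (by positivity)).1 h1
    by_contra h
    have hpos : 0 < ‖E x₀‖ := norm_pos_iff.2 h
    have hexp : 0 < Real.exp (K * (1 - ‖q‖)⁻¹) := Real.exp_pos _
    have hmain := hle (‖E x₀‖ / (2 * Real.exp (K * (1 - ‖q‖)⁻¹))) (by positivity)
    have h2 : Real.exp (K * (1 - ‖q‖)⁻¹) * (‖E x₀‖ / (2 * Real.exp (K * (1 - ‖q‖)⁻¹)))
        = ‖E x₀‖ / 2 := by
      field_simp
    rw [h2] at hmain
    linarith
  have hFG : F x₀ = GG q y x₀ := by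
    have h := hEzero
    simp only [hEdef] at h
    exact sub_eq_zero.mp h
  rw [hFG]
  show pochInf (-x₀) q / pochInf (x₀ * q) q * ∑' n : ℕ, cc q y n * (-x₀) ^ n = _
  congr 1
  exact tsum_congr fun n => by rw [cc]; ring
end

section
/- For all complex numbers q and x with |q| < 1, Σ_{m,n≥0} C̄_{d,r}(m,n) x^m q^n = f̄_{d,r}(x q^d; q), where C̄_{d,r}(m,n) denotes the number of overpartitions counted by C̄_{d,r}(n) having m parts. -/
open scoped BigOperators

/-- The two-variable generating function `f̄_{d,r}(x;q)`. -/
noncomputable def fbar (d r : ℕ) (x q : ℂ) : ℂ :=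
  ∑' p : ℕ × ℕ, (BbarMN d r p.1 p.2 : ℂ) * x ^ p.1 * q ^ p.2

/-! ### Auxiliary material for the proof -/

/-- Shift a part up by `d`. -/
def upP (d : ℕ) (p : ℕ × Bool) : ℕ × Bool := (p.1 + d, p.2)
/-- Shift a part down by `d`. -/
def dnP (d : ℕ) (p : ℕ × Bool) : ℕ × Bool := (p.1 - d, p.2)

lemma symb_up (d r : ℕ) (p : ℕ × Bool) : symb d r (upP d p) = symb d r p := by
  simp [symb, upP, Nat.add_mod_right]

lemma mod_dn (d : ℕ) (p : ℕ × Bool) (h : d ≤ p.1) : (p.1 - d) % d = p.1 % d := by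
  conv_rhs => rw [← Nat.sub_add_cancel h]
  exact (Nat.add_mod_right _ _).symm

lemma symb_dn (d r : ℕ) (p : ℕ × Bool) (h : d ≤ p.1) : symb d r (dnP d p) = symb d r p := by
  simp [symb, dnP, mod_dn d p h]

lemma gap_up (d r : ℕ) (a b : ℕ × Bool) (h : GapRel d r a b) :
    GapRel d r (upP d a) (upP d b) := by
  obtain ⟨h1, h2, h3, h4⟩ := h
  have hdiff : (upP d b).1 - (upP d a).1 = b.1 - a.1 := by simp only [upP]; omega
  refine ⟨by simp [upP, h1], fun hh => h2 (by simpa [upP] using hh), ?_, ?_⟩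
  · rw [symb_up, symb_up, hdiff]; exact h3
  · rw [symb_up, symb_up, hdiff]; exact h4

lemma gap_dn (d r : ℕ) (a b : ℕ × Bool) (ha : d ≤ a.1) (h : GapRel d r a b) :
    GapRel d r (dnP d a) (dnP d b) := by
  obtain ⟨h1, h2, h3, h4⟩ := h
  have hdiff : (dnP d b).1 - (dnP d a).1 = b.1 - a.1 := by simp [dnP]; omega
  refine ⟨by simp [dnP]; omega, fun hh => h2 (by simp [dnP] at hh; omega), ?_, ?_⟩
  · rw [symb_dn d r a ha, symb_dn d r b (le_trans ha h1), hdiff]; exact h3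
  · rw [symb_dn d r a ha, symb_dn d r b (le_trans ha h1), hdiff]; exact h4

lemma chain_up (d r : ℕ) (l : List (ℕ × Bool)) (h : List.Chain' (GapRel d r) l) :
    List.Chain' (GapRel d r) (l.map (upP d)) := by
  unfold List.Chain' at h ⊢
  rw [List.isChain_map]
  exact h.imp (fun a b => gap_up d r a b)

lemma chain_dn (d r : ℕ) : ∀ (l : List (ℕ × Bool)), (∀ p ∈ l, d ≤ p.1) →
    List.Chain' (GapRel d r) l → List.Chain' (GapRel d r) (l.map (dnP d))
  | [], _, _ => by exact List.isChain_nil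
  | [a], _, _ => by exact List.isChain_singleton _
  | a :: b :: t, hmem, hch => by
      unfold List.Chain' at hch ⊢
      rw [List.isChain_cons_cons] at hch
      rw [List.map_cons, List.map_cons, List.isChain_cons_cons]
      refine ⟨gap_dn d r a b (hmem a (by simp)) hch.1, ?_⟩
      rw [← List.map_cons]
      exact chain_dn d r (b :: t) (fun p hp => hmem p (List.mem_cons_of_mem a hp)) hch.2

lemma mod_add_d (d n a : ℕ) (hd : 0 < d) (h : n % (2 * d) = a) :
    (n + d) % (2 * d) = (a + d) % (2 * d) := by
  have ha : a < 2 * d := h ▸ Nat.mod_lt n (by omega)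
  rw [Nat.add_mod, h, Nat.add_mod a d, Nat.mod_eq_of_lt ha]

lemma mod_sub_d (d n a : ℕ) (hd : 0 < d) (hn : d ≤ n) (ha : a < 2 * d)
    (h : n % (2 * d) = (a + d) % (2 * d)) : (n - d) % (2 * d) = a := by
  have h1 : (n - d) + d ≡ a + d [MOD 2 * d] := by
    rwa [Nat.sub_add_cancel hn, Nat.ModEq]
  have h2 := Nat.ModEq.add_right_cancel' d h1
  rw [Nat.ModEq, Nat.mod_eq_of_lt ha] at h2
  exact h2

lemma isCbar_up (d r : ℕ) (hd : 3 ≤ d) (hr : 1 ≤ r) (hrd : 2 * r < d)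
    (l : List (ℕ × Bool)) (hb : IsBbar d r l) : IsCbar d r (l.map (upP d)) := by
  obtain ⟨hp, hc, hh⟩ := hb
  have hd0 : 0 < d := by omega
  refine ⟨?_, chain_up d r l hc, ?_⟩
  · intro p hpl
    rw [List.mem_map] at hpl
    obtain ⟨q, hq, rfl⟩ := hpl
    obtain ⟨hq1, hq2, hq3⟩ := hp q hq
    exact ⟨⟨by simp [upP]; omega, by simpa [upP, Nat.add_mod_right] using hq2,
      by simpa [upP, Nat.add_mod_right] using hq3⟩, by simp [upP]; omega⟩
  · intro p hpl
    rw [List.head?_map, Option.mem_map] at hpl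
    obtain ⟨q, hq, rfl⟩ := hpl
    rcases hh q hq with ⟨hq2, hq1⟩ | ⟨hq2, hq1⟩
    · refine Or.inl ⟨by simpa [upP] using hq2, ?_⟩
      rcases hq1 with h | h | h
      · exact Or.inl (by
          rw [show (upP d q).1 = q.1 + d from rfl, mod_add_d d q.1 r hd0 h,
            Nat.mod_eq_of_lt (by omega)]
          omega)
      · exact Or.inr (Or.inl (by
          rw [show (upP d q).1 = q.1 + d from rfl, mod_add_d d q.1 (d - r) hd0 h,
            show d - r + d = 2 * d - r by omega, Nat.mod_eq_of_lt (by omega)]))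
      · exact Or.inr (Or.inr (by
          rw [show (upP d q).1 = q.1 + d from rfl, mod_add_d d q.1 d hd0 h,
            show d + d = 2 * d by omega, Nat.mod_self]))
    · refine Or.inr ⟨by simpa [upP] using hq2, ?_⟩
      rw [show (upP d q).1 = q.1 + d from rfl, mod_add_d d q.1 0 hd0 hq1,
        Nat.zero_add, Nat.mod_eq_of_lt (by omega)]

lemma isBbar_dn (d r : ℕ) (hd : 3 ≤ d) (hr : 1 ≤ r) (hrd : 2 * r < d)
    (l : List (ℕ × Bool)) (hb : IsCbar d r l) : IsBbar d r (l.map (dnP d)) := by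
  obtain ⟨hp, hc, hh⟩ := hb
  have hd0 : 0 < d := by omega
  refine ⟨?_, chain_dn d r l (fun p hpl => le_of_lt (hp p hpl).2) hc, ?_⟩
  · intro p hpl
    rw [List.mem_map] at hpl
    obtain ⟨q, hq, rfl⟩ := hpl
    obtain ⟨⟨hq1, hq2, hq3⟩, hq4⟩ := hp q hq
    have hm := mod_dn d q (le_of_lt hq4)
    exact ⟨by simp [dnP]; omega, by simpa [dnP, hm] using hq2, by simpa [dnP, hm] using hq3⟩
  · intro p hpl
    rw [List.head?_map, Option.mem_map] at hpl
    obtain ⟨q, hq, rfl⟩ := hpl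
    have hql : d < q.1 := (hp q (List.mem_of_mem_head? hq)).2
    rcases hh q hq with ⟨hq2, hq1⟩ | ⟨hq2, hq1⟩
    · refine Or.inl ⟨by simpa [dnP] using hq2, ?_⟩
      rcases hq1 with h | h | h
      · exact Or.inl (mod_sub_d d q.1 r hd0 (by omega) (by omega)
          (by rw [h, Nat.mod_eq_of_lt (by omega)]; omega))
      · exact Or.inr (Or.inl (mod_sub_d d q.1 (d - r) hd0 (by omega) (by omega)
          (by rw [h, Nat.mod_eq_of_lt (by omega)]; omega)))
      · exact Or.inr (Or.inr (mod_sub_d d q.1 d hd0 (by omega) (by omega)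
          (by rw [h, show d + d = 2 * d by omega, Nat.mod_self])))
    · refine Or.inr ⟨by simpa [dnP] using hq2, ?_⟩
      exact mod_sub_d d q.1 0 hd0 (by omega) (by omega)
        (by rw [hq1, Nat.zero_add, Nat.mod_eq_of_lt (by omega)])

lemma sum_up (d : ℕ) (l : List (ℕ × Bool)) :
    ((l.map (upP d)).map Prod.fst).sum = (l.map Prod.fst).sum + l.length * d := by
  induction l with
  | nil => simp
  | cons a t ih =>
      simp only [List.map_cons, List.sum_cons, List.length_cons, ih, upP]
      ring

lemma length_d_le_sum (d : ℕ) : ∀ (l : List (ℕ × Bool)), (∀ p ∈ l, d ≤ p.1) →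
    l.length * d ≤ (l.map Prod.fst).sum
  | [], _ => by simp
  | a :: t, h => by
      simp only [List.map_cons, List.sum_cons, List.length_cons]
      have h1 := h a (by simp)
      have h2 := length_d_le_sum d t (fun p hp => h p (by simp [hp]))
      nlinarith

/-- The shift-by-`d` bijection between `B̄` and `C̄` overpartitions. -/
noncomputable def shiftEquiv (d r m k : ℕ) (hd : 3 ≤ d) (hr : 1 ≤ r) (hrd : 2 * r < d) :
    {l : List (ℕ × Bool) // IsBbar d r l ∧ l.length = m ∧ (l.map Prod.fst).sum = k} ≃
    {l : List (ℕ × Bool) // IsCbar d r l ∧ l.length = m ∧ (l.map Prod.fst).sum = k + m * d} where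
  toFun l := ⟨l.1.map (upP d), isCbar_up d r hd hr hrd l.1 l.2.1,
    by simp [l.2.2.1], by rw [sum_up, l.2.2.1, l.2.2.2]⟩
  invFun l := ⟨l.1.map (dnP d), isBbar_dn d r hd hr hrd l.1 l.2.1,
    by simp [l.2.2.1], by
      have hud : (l.1.map (dnP d)).map (upP d) = l.1 := by
        rw [List.map_map]
        refine List.map_congr_left (fun p hp => ?_) |>.trans (List.map_id l.1)
        have := (l.2.1.1 p hp).2
        simp only [Function.comp_apply, id_eq, upP, dnP, Prod.mk.injEq, Prod.ext_iff, and_true]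
        omega
      have := sum_up d (l.1.map (dnP d))
      rw [hud, l.2.2.2, List.length_map, l.2.2.1] at this
      omega⟩
  left_inv l := by
    apply Subtype.ext
    show (l.1.map (upP d)).map (dnP d) = l.1
    rw [List.map_map]
    refine List.map_congr_left (fun p hp => ?_) |>.trans (List.map_id l.1)
    simp [Function.comp, upP, dnP]
  right_inv l := by
    apply Subtype.ext
    show (l.1.map (dnP d)).map (upP d) = l.1
    rw [List.map_map]
    refine List.map_congr_left (fun p hp => ?_) |>.trans (List.map_id l.1)
    have := (l.2.1.1 p hp).2
    simp only [Function.comp_apply, id_eq, upP, dnP, Prod.mk.injEq, Prod.ext_iff, and_true]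
    omega

lemma CbarMN_eq_BbarMN (d r m k : ℕ) (hd : 3 ≤ d) (hr : 1 ≤ r) (hrd : 2 * r < d) :
    CbarMN d r m (k + m * d) = BbarMN d r m k :=
  (Nat.card_congr (shiftEquiv d r m k hd hr hrd)).symm

lemma CbarMN_eq_zero (d r m n : ℕ) (h : n < m * d) : CbarMN d r m n = 0 := by
  rw [CbarMN]
  have : IsEmpty {l : List (ℕ × Bool) // IsCbar d r l ∧ l.length = m ∧
      (l.map Prod.fst).sum = n} := by
    refine ⟨fun l => ?_⟩
    obtain ⟨l, hC, hlen, hsum⟩ := l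
    have h1 := length_d_le_sum d l (fun p hp => le_of_lt (hC.1 p hp).2)
    rw [hlen, hsum] at h1
    omega
  exact Nat.card_of_isEmpty

/-- The two-variable generating function of `C̄_{d,r}(m,n)` is `f̄_{d,r}(x q^d; q)`. -/
theorem Cbar_gen_two_var (d r : ℕ) (hd : 3 ≤ d) (hr : 1 ≤ r) (hrd : 2 * r < d)
    (q x : ℂ) (hq : ‖q‖ < 1) :
    ∑' p : ℕ × ℕ, (CbarMN d r p.1 p.2 : ℂ) * x ^ p.1 * q ^ p.2 =
      fbar d r (x * q ^ d) q := by
  set F : ℕ × ℕ → ℂ := fun p => (CbarMN d r p.1 p.2 : ℂ) * x ^ p.1 * q ^ p.2 with hF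
  set e : ℕ × ℕ → ℕ × ℕ := fun p => (p.1, p.2 + p.1 * d) with he
  have hinj : Function.Injective e := by
    intro a b hab
    simp only [he, Prod.mk.injEq] at hab
    obtain ⟨h1, h2⟩ := hab
    exact Prod.ext h1 (by rw [h1] at h2; omega)
  have hsupp : Function.support F ⊆ Set.range e := by
    intro p hp
    rcases le_or_gt (p.1 * d) p.2 with hge | hlt
    · exact ⟨(p.1, p.2 - p.1 * d), by
        simp only [he]
        exact Prod.ext rfl (Nat.sub_add_cancel hge)⟩
    · exact absurd (by simp [hF, CbarMN_eq_zero d r p.1 p.2 hlt] : F p = 0) hp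
  have key : ∑' p : ℕ × ℕ, F (e p) = ∑' p : ℕ × ℕ, F p := hinj.tsum_eq hsupp
  rw [← key, fbar]
  refine tsum_congr fun p => ?_
  show (CbarMN d r p.1 (p.2 + p.1 * d) : ℂ) * x ^ p.1 * q ^ (p.2 + p.1 * d) =
    (BbarMN d r p.1 p.2 : ℂ) * (x * q ^ d) ^ p.1 * q ^ p.2
  rw [CbarMN_eq_BbarMN d r p.1 p.2 hd hr hrd, pow_add, pow_mul, mul_pow]
  ring
end

section
/- For every real number q with 0 < q < 1, the series defining g₂(−q^r; q^d) converges and satisfies g₂(−q^r; q^d) < 1. -/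
/-- Finite q-Pochhammer symbol `(a;q)_n` (real). -/
noncomputable def pochR (a q : ℝ) (n : ℕ) : ℝ := ∏ j ∈ Finset.range n, (1 - a * q ^ j)

/-- Infinite q-Pochhammer symbol `(a;q)_∞` (real). -/
noncomputable def pochInfR (a q : ℝ) : ℝ := ∏' j : ℕ, (1 - a * q ^ j)

/-- The universal mock theta function `g₂(x;q)` (real). -/
noncomputable def g2R (x q : ℝ) : ℝ :=
  ∑' n : ℕ, pochR (-q) q n * q ^ (n * (n + 1) / 2) / (pochR x q (n + 1) * pochR (q / x) q (n + 1))

lemma pochR_succ (a q : ℝ) (n : ℕ) :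
    pochR a q (n + 1) = pochR a q n * (1 - a * q ^ n) := Finset.prod_range_succ _ n

lemma pochR_neg_pos {a q : ℝ} (ha : 0 ≤ a) (hq : 0 ≤ q) (n : ℕ) : 0 < pochR (-a) q n := by
  unfold pochR
  apply Finset.prod_pos
  intro j _
  have h : 0 ≤ a * q ^ j := mul_nonneg ha (pow_nonneg hq j)
  nlinarith

lemma ratio_le (X Y Q u : ℝ) (hX : 0 ≤ X) (hY : 0 ≤ Y) (hQ : 0 < Q)
    (hXY : X * Y = Q) (hu : 0 ≤ u) (huQ : u ≤ Q)
    (hsQ : (0:ℝ) < 1 + (X + Y) * Q) (hXu : (0:ℝ) < 1 + X * u) (hYu : (0:ℝ) < 1 + Y * u) :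
    (1 + u) * u / ((1 + X * u) * (1 + Y * u)) ≤ Q * (1 + Q) / (1 + (X + Y) * Q) := by
  rw [div_le_div_iff₀ (by positivity) hsQ]
  have hexp : (1 + X * u) * (1 + Y * u) = 1 + (X + Y) * u + Q * u ^ 2 := by
    linear_combination u ^ 2 * hXY
  rw [hexp]
  have h1 : (0:ℝ) ≤ (X + Y) * Q * u := mul_nonneg (mul_nonneg (add_nonneg hX hY) hQ.le) hu
  nlinarith [mul_nonneg (by linarith : (0:ℝ) ≤ Q - u) (by linarith : (0:ℝ) ≤ 1 + Q + u + (X + Y) * Q * u),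
    mul_nonneg (mul_nonneg (mul_nonneg hQ.le hQ.le) (by linarith : (0:ℝ) ≤ 1 + Q)) (sq_nonneg u)]

lemma key_ineq (s Q : ℝ) (hQ0 : 0 < Q) (hQ1 : Q < 1) (hs2Q : 2 * Q ≤ s) :
    Q * (1 + Q) * (1 + s + Q) < (s + Q) * (1 + s * Q) := by
  nlinarith [mul_nonneg (by linarith : (0:ℝ) ≤ s - 2*Q) (by linarith : (0:ℝ) ≤ 1 - Q),
    mul_nonneg (mul_nonneg (by linarith : (0:ℝ) ≤ s - 2*Q) (by linarith : (0:ℝ) ≤ s + 2*Q)) hQ0.le,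
    mul_nonneg hQ0.le (sq_nonneg (3*Q - 2))]

set_option maxHeartbeats 1000000 in
/-- For real `0 < q < 1`, the series defining `g₂(−q^r; q^d)` converges and its sum is `< 1`. -/
theorem g2_summable_and_lt_one (d r : ℕ) (hd : 3 ≤ d) (hr : 1 ≤ r) (hrd : 2 * r < d)
    (q : ℝ) (hq0 : 0 < q) (hq1 : q < 1) :
    Summable (fun n : ℕ =>
      pochR (-(q ^ d)) (q ^ d) n * (q ^ d) ^ (n * (n + 1) / 2) /
        (pochR (-(q ^ r)) (q ^ d) (n + 1) * pochR (q ^ d / -(q ^ r)) (q ^ d) (n + 1))) ∧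
    g2R (-(q ^ r)) (q ^ d) < 1 := by
  set Q : ℝ := q ^ d with hQdef
  set X : ℝ := q ^ r with hXdef
  set Y : ℝ := q ^ (d - r) with hYdef
  have hrd' : r ≤ d := by omega
  have hQ0 : 0 < Q := pow_pos hq0 d
  have hQ1 : Q < 1 := pow_lt_one₀ hq0.le hq1 (by omega)
  have hX0 : 0 < X := pow_pos hq0 r
  have hY0 : 0 < Y := pow_pos hq0 (d - r)
  have hXY : X * Y = Q := by
    rw [hXdef, hYdef, hQdef, ← pow_add]
    congr 1
    omega
  have hQX : Q ≤ X := pow_le_pow_of_le_one hq0.le hq1.le hrd'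
  have hQY : Q ≤ Y := pow_le_pow_of_le_one hq0.le hq1.le (by omega)
  have hdiv : Q / -X = -Y := by
    rw [div_neg, neg_inj, div_eq_iff hX0.ne', mul_comm]
    exact hXY.symm
  set f : ℕ → ℝ := fun n => pochR (-Q) Q n * Q ^ (n * (n + 1) / 2) /
      (pochR (-X) Q (n + 1) * pochR (-Y) Q (n + 1)) with hf
  have hfpos : ∀ n, 0 < f n := by
    intro n
    apply div_pos
    · exact mul_pos (pochR_neg_pos hQ0.le hQ0.le n) (pow_pos hQ0 _)
    · exact mul_pos (pochR_neg_pos hX0.le hQ0.le _) (pochR_neg_pos hY0.le hQ0.le _)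
  have hs2Q : 2 * Q ≤ X + Y := by linarith
  have hs0 : 0 < X + Y := by linarith
  have hden : (0:ℝ) < 1 + (X + Y) * Q := by nlinarith
  set ρ : ℝ := Q * (1 + Q) / (1 + (X + Y) * Q) with hρ
  have hρ0 : 0 ≤ ρ := by
    apply div_nonneg _ hden.le
    nlinarith
  have hP : (0:ℝ) < 1 + (X + Y) + Q := by linarith
  have key : Q * (1 + Q) * (1 + (X + Y) + Q) < ((X + Y) + Q) * (1 + (X + Y) * Q) :=
    key_ineq (X + Y) Q hQ0 hQ1 hs2Q
  have hρlt : ρ < ((X + Y) + Q) / (1 + (X + Y) + Q) := by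
    rw [hρ, div_lt_div_iff₀ hden hP]
    linarith [key]
  have hρ1 : ρ < 1 := by
    refine hρlt.trans_le ?_
    rw [div_le_one hP]
    linarith
  have h1ρ : (0:ℝ) < 1 - ρ := by linarith
  -- ratio step
  have hstep : ∀ n, f (n + 1) ≤ ρ * f n := by
    intro n
    have hBpos := pochR_neg_pos hX0.le hQ0.le (n + 1)
    have hCpos := pochR_neg_pos hY0.le hQ0.le (n + 1)
    have hNpos := pochR_neg_pos hQ0.le hQ0.le n
    have hu0 : 0 < Q ^ (n + 1) := pow_pos hQ0 _
    have huQ : Q ^ (n + 1) ≤ Q := by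
      calc Q ^ (n + 1) ≤ Q ^ 1 := pow_le_pow_of_le_one hQ0.le hQ1.le (by omega)
        _ = Q := pow_one Q
    have hDX : (0:ℝ) < 1 + X * Q ^ (n + 1) := by nlinarith
    have hDY : (0:ℝ) < 1 + Y * Q ^ (n + 1) := by nlinarith
    have hexp : (n + 1) * ((n + 1) + 1) / 2 = n * (n + 1) / 2 + (n + 1) := by
      have h2 := Nat.even_iff.mp (Nat.even_mul_succ_self n)
      have h3 : (n + 1) * ((n + 1) + 1) = n * (n + 1) + 2 * (n + 1) := by ring
      omega
    have e1 : pochR (-Q) Q (n + 1) = pochR (-Q) Q n * (1 + Q ^ (n + 1)) := by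
      rw [pochR_succ, pow_succ']; ring
    have e2 : pochR (-X) Q (n + 2) = pochR (-X) Q (n + 1) * (1 + X * Q ^ (n + 1)) := by
      rw [pochR_succ]; ring
    have e3 : pochR (-Y) Q (n + 2) = pochR (-Y) Q (n + 1) * (1 + Y * Q ^ (n + 1)) := by
      rw [pochR_succ]; ring
    have epow : Q ^ ((n + 1) * ((n + 1) + 1) / 2) = Q ^ (n * (n + 1) / 2) * Q ^ (n + 1) := by
      rw [hexp, pow_add]
    have keyeq : f (n + 1) = f n *
        ((1 + Q ^ (n + 1)) * Q ^ (n + 1) / ((1 + X * Q ^ (n + 1)) * (1 + Y * Q ^ (n + 1)))) := by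
      show pochR (-Q) Q (n + 1) * Q ^ ((n + 1) * ((n + 1) + 1) / 2) /
          (pochR (-X) Q (n + 1 + 1) * pochR (-Y) Q (n + 1 + 1)) = _
      rw [show n + 1 + 1 = n + 2 from rfl, e1, e2, e3, epow, hf]
      field_simp
    have hratio : (1 + Q ^ (n + 1)) * Q ^ (n + 1) /
        ((1 + X * Q ^ (n + 1)) * (1 + Y * Q ^ (n + 1))) ≤ ρ :=
      ratio_le X Y Q (Q ^ (n + 1)) hX0.le hY0.le hQ0 hXY hu0.le huQ hden hDX hDY
    calc f (n + 1) = f n * ((1 + Q ^ (n + 1)) * Q ^ (n + 1) /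
          ((1 + X * Q ^ (n + 1)) * (1 + Y * Q ^ (n + 1)))) := keyeq
      _ ≤ f n * ρ := mul_le_mul_of_nonneg_left hratio (hfpos n).le
      _ = ρ * f n := mul_comm _ _
  have hgeom : ∀ n, f n ≤ f 0 * ρ ^ n := by
    intro n
    induction n with
    | zero => simp
    | succ k ih =>
      calc f (k + 1) ≤ ρ * f k := hstep k
        _ ≤ ρ * (f 0 * ρ ^ k) := mul_le_mul_of_nonneg_left ih hρ0
        _ = f 0 * ρ ^ (k + 1) := by ring
  have hgsum : Summable (fun n : ℕ => f 0 * ρ ^ n) :=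
    (summable_geometric_of_lt_one hρ0 hρ1).mul_left _
  have hsumf : Summable f :=
    Summable.of_nonneg_of_le (fun n => (hfpos n).le) hgeom hgsum
  have hf0 : f 0 = 1 / ((1 + X) * (1 + Y)) := by
    simp [hf, pochR, Finset.prod_range_one]
  have hXY1 : (1 + X) * (1 + Y) = 1 + (X + Y) + Q := by
    linear_combination hXY
  have htsum : ∑' n, f n ≤ f 0 * (1 - ρ)⁻¹ := by
    calc ∑' n, f n ≤ ∑' n, f 0 * ρ ^ n := Summable.tsum_le_tsum hgeom hsumf hgsum
      _ = f 0 * ∑' n : ℕ, ρ ^ n := tsum_mul_left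
      _ = f 0 * (1 - ρ)⁻¹ := by rw [tsum_geometric_of_lt_one hρ0 hρ1]
  have e : (1:ℝ) - ((X + Y) + Q) / (1 + (X + Y) + Q) = 1 / (1 + (X + Y) + Q) := by
    field_simp
    ring
  have hf0lt : f 0 < 1 - ρ := by
    rw [hf0, hXY1]
    linarith [hρlt]
  have hfinal : f 0 * (1 - ρ)⁻¹ < 1 := by
    calc f 0 * (1 - ρ)⁻¹ < (1 - ρ) * (1 - ρ)⁻¹ :=
        mul_lt_mul_of_pos_right hf0lt (inv_pos.2 h1ρ)
      _ = 1 := mul_inv_cancel₀ h1ρ.ne'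
  have hlt : ∑' n, f n < 1 := lt_of_le_of_lt htsum hfinal
  have heq : (fun n : ℕ => pochR (-Q) Q n * Q ^ (n * (n + 1) / 2) /
      (pochR (-X) Q (n + 1) * pochR (Q / -X) Q (n + 1))) = f := by
    funext n
    rw [hdiv]
  constructor
  · rw [heq]
    exact hsumf
  · show g2R (-X) Q < 1
    unfold g2R
    rw [heq]
    exact hlt
end
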